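/- arXiv:2102.01198 — 4 statements merged into one kernel-verified Lean document; each statement's English description precedes it below -/
import Mathlib

section
/- Let λ ∈ (0,1/2), Γ > 0, and let P be a non-discrete probability measure on ℝ. If the channel W_P with additive white noise P has positive message transmission feedback capacity with average power constraint Γ, then there exists a blocklength n_s (depending only on λ, Γ and P) such that for every positive integer N and every n ≥ n_s there exists an (n, N, λ₁, λ₂) deterministic identification feedback code for W_P with average power constraint Γ and with λ₁ ≤ λ and λ₂ ≤ λ. -/
open MeasureTheory

noncomputable section

/-- A feedback encoding function of length `n`: the `t`-th component maps the
previous `t` channel outputs to the next channel input. -/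
def FeedbackFn (n : ℕ) := (t : Fin n) → (Fin (t : ℕ) → ℝ) → ℝ

/-- All components of the feedback encoding function are measurable. -/
def FeedbackFn.Meas {n : ℕ} (f : FeedbackFn n) : Prop := ∀ t, Measurable (f t)

/-- The output sequence: yₜ = fᵗ(y₁,…,y_{t−1}) + zₜ. -/
def outSeq {n : ℕ} (f : FeedbackFn n) (z : Fin n → ℝ) : Fin n → ℝ
  | t => f t (fun s => outSeq f z ⟨s.1, s.2.trans t.2⟩) + z t
termination_by t => (t : ℕ)

/-- Output distribution `W_P^n(·|f)` of the additive-noise channel with noise law `P`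
under the feedback encoding function `f`: the pushforward of `P^⊗n` under `outSeq f`. -/
def Wn {n : ℕ} (P : Measure ℝ) (f : FeedbackFn n) : Measure (Fin n → ℝ) :=
  (Measure.pi fun _ : Fin n => P).map (outSeq f)

/-- Average power constraint `Γ`. -/
def AvgPower {n : ℕ} (f : FeedbackFn n) (Γ : ℝ) : Prop :=
  ∀ y : Fin n → ℝ, ∑ t : Fin n, (f t fun s => y ⟨s.1, s.2.trans t.2⟩) ^ 2 ≤ n * Γ

/-- Peak power constraint `Γ`. -/
def PeakPower {n : ℕ} (f : FeedbackFn n) (Γ : ℝ) : Prop :=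
  ∀ (t : Fin n) (y : Fin (t : ℕ) → ℝ), |f t y| ≤ Γ

/-- An `(n, N, λ₁, λ₂)` deterministic identification feedback code for `W_P`
with average power constraint `Γ`. -/
def IsIDCodeAvg (P : Measure ℝ) (n N : ℕ) (lam₁ lam₂ Γ : ℝ)
    (f : Fin N → FeedbackFn n) (D : Fin N → Set (Fin n → ℝ)) : Prop :=
  (∀ i, (f i).Meas ∧ AvgPower (f i) Γ ∧ MeasurableSet (D i)) ∧
  (∀ i, Wn P (f i) (D i)ᶜ ≤ ENNReal.ofReal lam₁) ∧
  (∀ i j, i ≠ j → Wn P (f i) (D j) ≤ ENNReal.ofReal lam₂)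

/-- An `(n, M, λ)` deterministic message transmission feedback code for `W_P`
with average power constraint `Γ`. -/
def IsMTCodeAvg (P : Measure ℝ) (n M : ℕ) (lam Γ : ℝ)
    (f : Fin M → FeedbackFn n) (D : Fin M → Set (Fin n → ℝ)) : Prop :=
  (∀ i, (f i).Meas ∧ AvgPower (f i) Γ ∧ MeasurableSet (D i)) ∧
  (∀ i j, i ≠ j → Disjoint (D i) (D j)) ∧
  (∀ i, Wn P (f i) (D i)ᶜ ≤ ENNReal.ofReal lam)

/-- `W_P` has positive message transmission feedback capacity with average power
constraint `Γ`. -/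
def PosCapAvg (P : Measure ℝ) (Γ : ℝ) : Prop :=
  ∃ R : ℝ, 0 < R ∧ ∀ lam δ : ℝ, 0 < lam → 0 < δ → ∃ n₀ : ℕ, ∀ n : ℕ, n₀ ≤ n →
    ∃ M : ℕ, 0 < M ∧ (∃ f D, IsMTCodeAvg P n M lam Γ f D) ∧
      R - δ ≤ Real.logb 2 M / n


open Set Filter Topology

lemma outSeq_eq {n : ℕ} (f : FeedbackFn n) (z : Fin n → ℝ) (t : Fin n) :
    outSeq f z t = f t (fun s => outSeq f z ⟨s.1, s.2.trans t.2⟩) + z t := by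
  rw [outSeq]

lemma meas_outSeq {n : ℕ} (f : FeedbackFn n) (hf : f.Meas) : Measurable (outSeq f) := by
  have key : ∀ tv : ℕ, ∀ htv : tv < n, Measurable fun z => outSeq f z ⟨tv, htv⟩ := by
    intro tv
    induction tv using Nat.strong_induction_on with
    | _ tv ih =>
      intro htv
      have : (fun z => outSeq f z ⟨tv, htv⟩) =
          fun z => f ⟨tv, htv⟩ (fun s => outSeq f z ⟨s.1, s.2.trans htv⟩) + z ⟨tv, htv⟩ := by
        funext z; rw [outSeq_eq]
      rw [this]
      exact ((hf _).comp (measurable_pi_lambda _ fun s => ih s.1 s.2 _)).add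
        (measurable_pi_apply _)
  exact measurable_pi_lambda _ fun t => key t.1 t.2

lemma pit_le (ν : Measure ℝ) [IsFiniteMeasure ν] [NullSingletonClass ν] (s : ℝ)
    (hs0 : 0 ≤ s) (hs1 : ENNReal.ofReal s ≤ ν univ) :
    ν {x | (ν (Iic x)).toReal ≤ s} = ENNReal.ofReal s := by
  set G : ℝ → ℝ := fun x => (ν (Iic x)).toReal with hGdef
  have hG : ∀ x, ν (Iic x) = ENNReal.ofReal (G x) := fun x =>
    (ENNReal.ofReal_toReal (measure_ne_top _ _)).symm
  have hGm : Monotone G := fun a b hab =>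
    ENNReal.toReal_mono (measure_ne_top _ _) (measure_mono (Iic_subset_Iic.2 hab))
  set A : Set ℝ := {x | G x ≤ s} with hAdef
  by_cases hub : ∀ x, G x ≤ s
  · have hA : A = univ := eq_univ_of_forall hub
    rw [hA]
    have h1 : ν univ ≤ ENNReal.ofReal s := by
      refine le_of_tendsto (tendsto_measure_Iic_atTop ν) (Eventually.of_forall fun x => ?_)
      rw [hG x]; exact ENNReal.ofReal_le_ofReal (hub x)
    exact le_antisymm h1 hs1
  · push_neg at hub
    obtain ⟨x₁, hx₁⟩ := hub
    have hbdd : BddAbove A := by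
      refine ⟨x₁, fun a ha => ?_⟩
      by_contra hax
      push_neg at hax
      have := le_trans (hGm hax.le) ha
      linarith
    by_cases hne : A.Nonempty
    · set x₀ := sSup A with hx₀
      have hlow : Iio x₀ ⊆ A := by
        intro x hx
        obtain ⟨a, haA, hxa⟩ := exists_lt_of_lt_csSup hne hx
        exact le_trans (hGm hxa.le) haA
      have hhigh : A ⊆ Iic x₀ := fun a ha => le_csSup hbdd ha
      have hIio : ν (Iio x₀) = ν (Iic x₀) := measure_congr (Iio_ae_eq_Iic)
      have hup : ENNReal.ofReal s ≤ ν (Iic x₀) := by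
        have htend : Tendsto (fun n : ℕ => ν (Iic (x₀ + 1/(n+1)))) atTop
            (𝓝 (ν (⋂ n : ℕ, Iic (x₀ + 1/(n+1))))) :=
          tendsto_measure_iInter_atTop (fun n => measurableSet_Iic.nullMeasurableSet)
            (fun a b hab => Iic_subset_Iic.2 (by
              have : (1:ℝ)/(b+1) ≤ 1/(a+1) := by
                apply one_div_le_one_div_of_le <;> [positivity; exact_mod_cast by omega]
              linarith)) ⟨0, measure_ne_top _ _⟩
        have hInter : (⋂ n : ℕ, Iic (x₀ + 1/(n+1))) = Iic x₀ := by
          ext x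
          simp only [mem_iInter, mem_Iic]
          constructor
          · intro h
            by_contra hx
            push_neg at hx
            obtain ⟨n, hn⟩ := exists_nat_one_div_lt (sub_pos.2 hx)
            have := h n
            push_cast at hn ⊢
            linarith
          · intro h n
            have : (0:ℝ) < 1/(n+1) := by positivity
            linarith
        rw [hInter] at htend
        refine ge_of_tendsto htend (Eventually.of_forall fun n => ?_)
        have hnA : x₀ + 1/(n+1) ∉ A := by
          intro h
          have := le_csSup hbdd h
          have : (0:ℝ) < 1/(n+1) := by positivity
          linarith [le_csSup hbdd h]
        rw [hG]
        exact ENNReal.ofReal_le_ofReal (le_of_not_ge hnA)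
      have hdn : ν (Iio x₀) ≤ ENNReal.ofReal s := by
        have htend : Tendsto (fun n : ℕ => ν (Iic (x₀ - 1/(n+1)))) atTop
            (𝓝 (ν (⋃ n : ℕ, Iic (x₀ - 1/(n+1))))) :=
          tendsto_measure_iUnion_atTop (fun a b hab => Iic_subset_Iic.2 (by
            have : (1:ℝ)/(b+1) ≤ 1/(a+1) := by
              apply one_div_le_one_div_of_le <;> [positivity; exact_mod_cast by omega]
            linarith))
        have hU : (⋃ n : ℕ, Iic (x₀ - 1/(n+1))) = Iio x₀ := by
          ext x
          simp only [mem_iUnion, mem_Iic, mem_Iio]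
          constructor
          · rintro ⟨n, hn⟩
            have : (0:ℝ) < 1/(n+1) := by positivity
            linarith
          · intro h
            obtain ⟨n, hn⟩ := exists_nat_one_div_lt (sub_pos.2 h)
            exact ⟨n, by push_cast at hn ⊢; linarith⟩
        rw [hU] at htend
        refine le_of_tendsto htend (Eventually.of_forall fun n => ?_)
        have : x₀ - 1/(n+1) ∈ A := by
          apply hlow
          simp only [mem_Iio]
          have : (0:ℝ) < 1/(n+1) := by positivity
          linarith
        rw [hG]
        exact ENNReal.ofReal_le_ofReal this
      have h1 : ν A ≤ ENNReal.ofReal s := by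
        calc ν A ≤ ν (Iic x₀) := measure_mono hhigh
        _ = ν (Iio x₀) := hIio.symm
        _ ≤ ENNReal.ofReal s := hdn
      have h2 : ENNReal.ofReal s ≤ ν A := by
        calc ENNReal.ofReal s ≤ ν (Iic x₀) := hup
        _ = ν (Iio x₀) := hIio.symm
        _ ≤ ν A := measure_mono hlow
      exact le_antisymm h1 h2
    · have hA : A = ∅ := not_nonempty_iff_eq_empty.1 hne
      rw [hA, measure_empty]
      have hall : ∀ x, s < G x := by
        intro x
        by_contra h
        exact hne ⟨x, le_of_not_gt h⟩
      have h0 : ENNReal.ofReal s = 0 := by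
        have htend : Tendsto (fun n : ℕ => ν (Iic (-(n:ℝ)))) atTop
            (𝓝 (ν (⋂ n : ℕ, Iic (-(n:ℝ))))) :=
          tendsto_measure_iInter_atTop (fun n => measurableSet_Iic.nullMeasurableSet)
            (fun a b hab => Iic_subset_Iic.2 (by simp; exact_mod_cast hab))
            ⟨0, measure_ne_top _ _⟩
        have hI : (⋂ n : ℕ, Iic (-(n:ℝ))) = ∅ := by
          ext x
          simp only [mem_iInter, mem_Iic, mem_empty_iff_false, iff_false]
          push_neg
          obtain ⟨n, hn⟩ := exists_nat_gt (-x)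
          exact ⟨n, by linarith⟩
        rw [hI, measure_empty] at htend
        have := ge_of_tendsto htend (Eventually.of_forall fun n => by
          rw [hG]
          exact ENNReal.ofReal_le_ofReal (hall _).le)
        exact le_antisymm this zero_le
      rw [h0]

/-- `j`-th base-`M` digit of `v`. -/
def dig (M j : ℕ) (v : ℝ) : ℕ := ⌊v * (M:ℝ)^j⌋₊ % M

lemma measurable_dig (M j : ℕ) : Measurable (dig M j) := by
  have h1 : Measurable fun v : ℝ => ⌊v * (M:ℝ)^j⌋₊ :=
    Nat.measurable_floor.comp (measurable_id.mul_const _)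
  exact (measurable_from_top (f := fun n : ℕ => n % M)).comp h1

lemma dig_collision (ν : Measure ℝ) [IsFiniteMeasure ν] [NullSingletonClass ν] {M I J : ℕ} (hM : 0 < M)
    (hp1 : (ν univ).toReal ≤ 1) (hI : 1 ≤ I) (hIJ : I < J) :
    ν {x | dig M I ((ν (Iic x)).toReal / (ν univ).toReal) =
           dig M J ((ν (Iic x)).toReal / (ν univ).toReal)} ≤ ENNReal.ofReal (1/M) := by
  set p' : ℝ := (ν univ).toReal with hp'def
  have hp0 : 0 ≤ p' := ENNReal.toReal_nonneg
  rcases eq_or_lt_of_le hp0 with hp | hp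
  · -- ν = 0
    have : ν univ = 0 := by
      rcases (ENNReal.toReal_eq_zero_iff _).1 hp.symm with h | h
      · exact h
      · exact absurd h (measure_ne_top ν univ)
    calc ν _ ≤ ν univ := measure_mono (subset_univ _)
    _ = 0 := this
    _ ≤ _ := zero_le
  · set G : ℝ → ℝ := fun x => (ν (Iic x)).toReal with hGdef
    set U : ℝ → ℝ := fun x => G x / p' with hUdef
    have hνuniv : ν univ = ENNReal.ofReal p' := (ENNReal.ofReal_toReal (measure_ne_top _ _)).symm
    have hG0 : ∀ x, 0 ≤ G x := fun x => ENNReal.toReal_nonneg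
    have hGle : ∀ x, G x ≤ p' := fun x =>
      ENNReal.toReal_mono (measure_ne_top _ _) (measure_mono (subset_univ _))
    have hU0 : ∀ x, 0 ≤ U x := fun x => div_nonneg (hG0 x) hp0
    have hU1 : ∀ x, U x ≤ 1 := fun x => (div_le_one hp).2 (hGle x)
    have hms : ∀ c : ℝ, MeasurableSet {x | U x ≤ c} := by
      intro c
      have hmono : Monotone G := fun a b hab =>
        ENNReal.toReal_mono (measure_ne_top _ _) (measure_mono (Iic_subset_Iic.2 hab))
      exact (hmono.measurable.div_const _) measurableSet_Iic
    have hUm : Measurable U := by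
      have : Monotone G := fun a b hab =>
        ENNReal.toReal_mono (measure_ne_top _ _) (measure_mono (Iic_subset_Iic.2 hab))
      exact (this.measurable).div_const _
    -- law of U on Iic
    have hlaw : ∀ t : ℝ, 0 ≤ t → t ≤ 1 → ν {x | U x ≤ t} = ENNReal.ofReal (p' * t) := by
      intro t ht0 ht1
      have hset : {x | U x ≤ t} = {x | G x ≤ p' * t} := by
        ext x
        simp only [mem_setOf_eq, hUdef]
        rw [div_le_iff₀ hp]
        constructor <;> intro h <;> linarith
      rw [hset]
      exact pit_le ν (p' * t) (by positivity)
        (by rw [hνuniv]; exact ENNReal.ofReal_le_ofReal (by nlinarith))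
    -- singleton null
    have hsingle : ∀ s : ℝ, 0 ≤ s → s ≤ 1 → ν {x | U x = s} = 0 := by
      intro s hs0 hs1
      rcases eq_or_lt_of_le hs0 with h0 | h0
      · have : {x | U x = s} ⊆ {x | U x ≤ 0} := fun x hx => by
          simp only [mem_setOf_eq] at *; rw [hx, ← h0]
        refine le_antisymm (le_trans (measure_mono this) ?_) zero_le
        rw [hlaw 0 le_rfl zero_le_one, mul_zero, ENNReal.ofReal_zero]
      · have key : ∀ n : ℕ, ν {x | U x = s} ≤ ENNReal.ofReal (p' * (1/(n+1))) := by
          intro n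
          set ε : ℝ := min s (1/(n+1)) with hεdef
          have hε0 : 0 < ε := lt_min h0 (by positivity)
          have hεs : ε ≤ s := min_le_left _ _
          have hsub : {x | U x ≤ s - ε} ⊆ {x | U x ≤ s} := fun x hx => by
            simp only [mem_setOf_eq] at *; linarith
          have hdiff : {x | U x = s} ⊆ {x | U x ≤ s} \ {x | U x ≤ s - ε} := by
            intro x hx
            simp only [mem_setOf_eq] at hx
            refine ⟨by simp only [mem_setOf_eq]; linarith, ?_⟩
            intro hc
            simp only [mem_setOf_eq] at hc
            linarith
          refine le_trans (measure_mono hdiff) ?_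
          rw [measure_diff hsub ((hms _)).nullMeasurableSet (measure_ne_top _ _)]
          rw [hlaw s hs0 hs1, hlaw (s - ε) (by linarith) (by linarith)]
          rw [← ENNReal.ofReal_sub _ (mul_nonneg hp0 (by linarith))]
          refine ENNReal.ofReal_le_ofReal ?_
          have : ε ≤ 1/(n+1) := min_le_right _ _
          nlinarith
        have htend : Tendsto (fun n : ℕ => ENNReal.ofReal (p' * (1/(n+1)))) atTop (𝓝 0) := by
          rw [← ENNReal.ofReal_zero]
          apply ENNReal.tendsto_ofReal
          have : Tendsto (fun n : ℕ => (1:ℝ)/(n+1)) atTop (𝓝 0) := tendsto_one_div_add_atTop_nhds_zero_nat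
          have := this.const_mul p'
          simpa using this
        have := ge_of_tendsto htend (Eventually.of_forall key)
        exact le_antisymm this zero_le
    -- cell bound
    have hcell : ∀ s t : ℝ, 0 ≤ s → s ≤ t → t ≤ 1 →
        ν {x | s ≤ U x ∧ U x < t} ≤ ENNReal.ofReal (p' * (t - s)) := by
      intro s t hs0 hst ht1
      have hsub : {x | s ≤ U x ∧ U x < t} ⊆ ({x | U x ≤ t} \ {x | U x ≤ s}) ∪ {x | U x = s} := by
        intro x hx
        simp only [mem_setOf_eq, mem_union, mem_diff] at *
        rcases eq_or_lt_of_le hx.1 with h | h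
        · exact Or.inr h.symm
        · refine Or.inl ⟨hx.2.le, ?_⟩
          intro hc
          linarith
      refine le_trans (measure_mono hsub) (le_trans (measure_union_le _ _) ?_)
      rw [hsingle s hs0 (le_trans hst ht1), add_zero]
      rw [measure_diff (fun x hx => by
          simp only [mem_setOf_eq] at hx ⊢; linarith)
        ((hms _)).nullMeasurableSet (measure_ne_top _ _)]
      rw [hlaw t (le_trans hs0 hst) ht1, hlaw s hs0 (le_trans hst ht1)]
      rw [← ENNReal.ofReal_sub _ (mul_nonneg hp0 hs0)]
      exact ENNReal.ofReal_le_ofReal (le_of_eq (by ring))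
    -- main covering argument
    have hMR : (0:ℝ) < (M:ℝ) := by exact_mod_cast hM
    have hMJ : (0:ℝ) < (M:ℝ)^J := by positivity
    set S : Finset ℕ := (Finset.range (M^J)).filter
      (fun t => (t / M^(J-I)) % M = t % M) with hSdef
    have hgoal : {x | dig M I ((ν (Iic x)).toReal / (ν univ).toReal) =
        dig M J ((ν (Iic x)).toReal / (ν univ).toReal)} =
        {x | dig M I (U x) = dig M J (U x)} := rfl
    rw [hgoal]
    have hcover : {x | dig M I (U x) = dig M J (U x)} ⊆
        (⋃ t ∈ S, {x | (t:ℝ)/(M:ℝ)^J ≤ U x ∧ U x < ((t:ℝ)+1)/(M:ℝ)^J}) ∪ {x | U x = 1} := by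
      intro x hx
      simp only [mem_setOf_eq] at hx
      rcases eq_or_lt_of_le (hU1 x) with h1 | h1
      · exact Or.inr h1
      · left
        set t : ℕ := ⌊U x * (M:ℝ)^J⌋₊ with htdef
        have hnn : 0 ≤ U x * (M:ℝ)^J := mul_nonneg (hU0 x) hMJ.le
        have htlt : t < M^J := by
          rw [htdef, Nat.floor_lt hnn]
          push_cast
          calc U x * (M:ℝ)^J < 1 * (M:ℝ)^J := by
                exact mul_lt_mul_of_pos_right h1 hMJ
          _ = (M:ℝ)^J := one_mul _
        have hfloorI : ⌊U x * (M:ℝ)^I⌋₊ = t / M^(J-I) := by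
          have hJeq : J = I + (J - I) := by omega
          have h1' : U x * (M:ℝ)^I = (U x * (M:ℝ)^J) / ((M^(J-I) : ℕ) : ℝ) := by
            rw [hJeq]
            push_cast
            rw [pow_add]
            have : ((M:ℝ)^(J-I)) ≠ 0 := by positivity
            field_simp
            rw [Nat.add_sub_cancel_left]
          rw [h1', Nat.floor_div_natCast]
        have htS : t ∈ S := by
          rw [hSdef]
          simp only [Finset.mem_filter, Finset.mem_range]
          refine ⟨htlt, ?_⟩
          have hdI : dig M I (U x) = (t / M^(J-I)) % M := by
            rw [dig, hfloorI]
          have hdJ : dig M J (U x) = t % M := rfl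
          rw [hdI, hdJ] at hx
          exact hx
        refine mem_biUnion htS ?_
        simp only [mem_setOf_eq]
        constructor
        · rw [div_le_iff₀ hMJ]
          exact Nat.floor_le hnn
        · rw [lt_div_iff₀ hMJ]
          exact Nat.lt_floor_add_one _
    refine le_trans (measure_mono hcover) (le_trans (measure_union_le _ _) ?_)
    rw [hsingle 1 zero_le_one le_rfl, add_zero]
    refine le_trans (measure_biUnion_finset_le S _) ?_
    have hterm : ∀ t ∈ S, ν {x | (t:ℝ)/(M:ℝ)^J ≤ U x ∧ U x < ((t:ℝ)+1)/(M:ℝ)^J} ≤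
        ENNReal.ofReal (p' * (1/(M:ℝ)^J)) := by
      intro t ht
      rw [hSdef] at ht
      simp only [Finset.mem_filter, Finset.mem_range] at ht
      have ht1 : ((t:ℝ)+1)/(M:ℝ)^J ≤ 1 := by
        rw [div_le_one hMJ]
        have : (t:ℝ) + 1 ≤ ((M^J : ℕ) : ℝ) := by
          exact_mod_cast Nat.succ_le_of_lt ht.1
        push_cast at this ⊢
        linarith
      have := hcell ((t:ℝ)/(M:ℝ)^J) (((t:ℝ)+1)/(M:ℝ)^J)
        (by positivity)
        ((div_le_div_iff_of_pos_right hMJ).2 (by linarith))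
        ht1
      convert this using 2
      rw [div_sub_div_same]
      ring_nf
    refine le_trans (Finset.sum_le_sum hterm) ?_
    rw [Finset.sum_const, nsmul_eq_mul]
    -- card bound
    have hcard : S.card ≤ M^(J-1) := by
      have hinj : S.card ≤ (Finset.range (M^(J-1))).card := by
        apply Finset.card_le_card_of_injOn (fun t => t / M)
        · intro t ht
          rw [hSdef] at ht
          simp only [Finset.mem_coe, Finset.mem_filter, Finset.mem_range] at ht
          simp only [Finset.mem_coe, Finset.mem_range]
          rw [Nat.div_lt_iff_lt_mul hM]
          have h1 : M^(J-1) * M = M^J := by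
            rw [← pow_succ]
            congr 1
            omega
          rw [h1]
          exact ht.1
        · intro a ha b hb hab
          rw [hSdef] at ha hb
          simp only [Finset.mem_coe, Finset.mem_filter, Finset.mem_range] at ha hb
          have hdd : ∀ c : ℕ, c / M / M^(J-I-1) = c / M^(J-I) := by
            intro c
            rw [Nat.div_div_eq_div_mul]
            congr 1
            rw [← pow_succ']
            congr 1
            omega
          have hab2 : a / M = b / M := by simpa using hab
          have hmod : a % M = b % M := by
            rw [← ha.2, ← hb.2, ← hdd a, ← hdd b, hab2]
          calc a = M * (a / M) + a % M := (Nat.div_add_mod a M).symm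
          _ = M * (b / M) + b % M := by rw [hab2, hmod]
          _ = b := Nat.div_add_mod b M
      simpa using hinj
    calc (S.card : ENNReal) * ENNReal.ofReal (p' * (1/(M:ℝ)^J))
        ≤ (M^(J-1) : ℕ) * ENNReal.ofReal (p' * (1/(M:ℝ)^J)) := by
          apply mul_le_mul_left
          exact_mod_cast Nat.cast_le.2 hcard
    _ = ENNReal.ofReal (((M^(J-1) : ℕ):ℝ) * (p' * (1/(M:ℝ)^J))) := by
          rw [← ENNReal.ofReal_natCast (M^(J-1)),
            ← ENNReal.ofReal_mul (by positivity : (0:ℝ) ≤ ((M^(J-1):ℕ):ℝ))]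
    _ ≤ ENNReal.ofReal (1/M) := by
          apply ENNReal.ofReal_le_ofReal
          push_cast
          have hpow : (M:ℝ)^J = (M:ℝ)^(J-1) * M := by
            rw [← pow_succ]
            congr 1
            omega
          rw [hpow]
          have hpp : (0:ℝ) < (M:ℝ)^(J-1) := by positivity
          have heq : (M:ℝ)^(J-1) * (p' * (1/((M:ℝ)^(J-1) * M))) = p' * (1/M) := by
            field_simp
          rw [heq]
          exact mul_le_of_le_one_left (by positivity) hp1

def headv {k m : ℕ} (z : Fin (k+m) → ℝ) : Fin k → ℝ := fun s => z (Fin.castAdd m s)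
def tailv {k m : ℕ} (z : Fin (k+m) → ℝ) : Fin m → ℝ := fun s => z (Fin.natAdd k s)

lemma measurable_headv {k m : ℕ} : Measurable (headv (k := k) (m := m)) :=
  measurable_pi_lambda _ fun s => measurable_pi_apply _
lemma measurable_tailv {k m : ℕ} : Measurable (tailv (k := k) (m := m)) :=
  measurable_pi_lambda _ fun s => measurable_pi_apply _

lemma measurePreserving_split (P : Measure ℝ) [IsProbabilityMeasure P] (k m : ℕ) :
    MeasurePreserving (fun z : Fin (k+m) → ℝ => (headv z, tailv z))
      (Measure.pi fun _ : Fin (k+m) => P)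
      ((Measure.pi fun _ : Fin k => P).prod (Measure.pi fun _ : Fin m => P)) := by
  have h1 : MeasurePreserving
      (MeasurableEquiv.piCongrLeft (fun _ : Fin (k+m) => ℝ) finSumFinEquiv).symm
      (Measure.pi fun _ : Fin (k+m) => P) (Measure.pi fun _ : Fin k ⊕ Fin m => P) :=
    (measurePreserving_piCongrLeft (fun _ : Fin (k+m) => P) finSumFinEquiv).symm _
  have h2 : MeasurePreserving
      (MeasurableEquiv.sumPiEquivProdPi (fun _ : Fin k ⊕ Fin m => ℝ))
      (Measure.pi fun _ : Fin k ⊕ Fin m => P)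
      ((Measure.pi fun _ : Fin k => P).prod (Measure.pi fun _ : Fin m => P)) :=
    measurePreserving_sumPiEquivProdPi (fun _ : Fin k ⊕ Fin m => P)
  have heq : (fun z : Fin (k+m) → ℝ => (headv z, tailv z)) =
      (MeasurableEquiv.sumPiEquivProdPi (fun _ : Fin k ⊕ Fin m => ℝ)) ∘
      (MeasurableEquiv.piCongrLeft (fun _ : Fin (k+m) => ℝ) finSumFinEquiv).symm := by
    funext z
    apply Prod.ext
    · funext s
      simp only [Function.comp_apply, MeasurableEquiv.sumPiEquivProdPi,
        MeasurableEquiv.piCongrLeft, MeasurableEquiv.symm_mk, MeasurableEquiv.coe_mk,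
        Equiv.sumPiEquivProdPi, Equiv.coe_fn_mk, headv]
      rw [← finSumFinEquiv_apply_left (i := s), Equiv.piCongrLeft_symm_apply]
    · funext s
      simp only [Function.comp_apply, MeasurableEquiv.sumPiEquivProdPi,
        MeasurableEquiv.piCongrLeft, MeasurableEquiv.symm_mk, MeasurableEquiv.coe_mk,
        Equiv.sumPiEquivProdPi, Equiv.coe_fn_mk, tailv]
      rw [← finSumFinEquiv_apply_right (i := s), Equiv.piCongrLeft_symm_apply]
  rw [heq]
  exact h2.comp h1

lemma prod_biUnion_rect {α β ι : Type*} [MeasurableSpace α] [MeasurableSpace β]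
    (μ : Measure α) (ν : Measure β) [SFinite ν] (s : Finset ι)
    (A : ι → Set α) (B : ι → Set β) (hA : ∀ i, MeasurableSet (A i))
    (hB : ∀ i, MeasurableSet (B i))
    (hd : Set.PairwiseDisjoint (s : Set ι) A) :
    (μ.prod ν) (⋃ i ∈ s, A i ×ˢ B i) = ∑ i ∈ s, μ (A i) * ν (B i) := by
  rw [measure_biUnion_finset ?_ (fun i _ => (hA i).prod (hB i))]
  · exact Finset.sum_congr rfl fun i _ => Measure.prod_prod _ _
  · intro i hi j hj hij
    have := hd hi hj hij
    simp only [Function.onFun] at this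
    rw [Set.disjoint_left] at this
    rw [Function.onFun, Set.disjoint_left]
    rintro ⟨a, b⟩ h1 h2
    exact this (Set.mem_prod.1 h1).1 (Set.mem_prod.1 h2).1

def extendF {k m M : ℕ} (T : (Fin k → ℝ) → Fin M) (g : Fin M → FeedbackFn m) :
    FeedbackFn (k+m) := fun t =>
  if h : (t : ℕ) < k then fun _ => 0
  else fun y => g (T (fun s : Fin k => y ⟨s.1, lt_of_lt_of_le s.2 (le_of_not_gt h)⟩))
      ⟨t.1 - k, by omega⟩
      (fun r => y ⟨k + r.1, by have hh : r.1 < t.1 - k := r.2; omega⟩)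

lemma extendF_apply_ge {k m M : ℕ} (T : (Fin k → ℝ) → Fin M) (g : Fin M → FeedbackFn m)
    (t : Fin (k+m)) (h : ¬ (t : ℕ) < k) (y : Fin (t : ℕ) → ℝ) :
    extendF T g t y = g (T (fun s : Fin k => y ⟨s.1, lt_of_lt_of_le s.2 (le_of_not_gt h)⟩))
      ⟨t.1 - k, by omega⟩
      (fun r => y ⟨k + r.1, by have hh : r.1 < t.1 - k := r.2; omega⟩) := by
  simp only [extendF, dif_neg h]

lemma g_congr {m M : ℕ} (g : Fin M → FeedbackFn m) {c c' : Fin M} (hc : c = c')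
    {a b : ℕ} (ha : a < m) (hb : b < m) (hab : a = b) (y : Fin a → ℝ) (y' : Fin b → ℝ)
    (hy : ∀ r : Fin a, y r = y' ⟨r.1, by omega⟩) :
    g c ⟨a, ha⟩ y = g c' ⟨b, hb⟩ y' := by
  subst hc
  subst hab
  congr 1
  funext r
  rw [hy r]

lemma outSeq_extendF_head {k m M : ℕ} (T : (Fin k → ℝ) → Fin M) (g : Fin M → FeedbackFn m)
    (z : Fin (k+m) → ℝ) (t : Fin (k+m)) (ht : (t : ℕ) < k) :
    outSeq (extendF T g) z t = z t := by
  rw [outSeq_eq]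
  simp only [extendF, dif_pos ht]
  ring

lemma outSeq_extendF_tail {k m M : ℕ} (T : (Fin k → ℝ) → Fin M) (g : Fin M → FeedbackFn m)
    (z : Fin (k+m) → ℝ) (s : Fin m) :
    outSeq (extendF T g) z (Fin.natAdd k s) = outSeq (g (T (headv z))) (tailv z) s := by
  suffices h : ∀ sv (hsv : sv < m), outSeq (extendF T g) z (Fin.natAdd k ⟨sv, hsv⟩) =
      outSeq (g (T (headv z))) (tailv z) ⟨sv, hsv⟩ by
    obtain ⟨sv, hsv⟩ := s
    exact h sv hsv
  intro sv
  induction sv using Nat.strong_induction_on with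
  | _ sv ih =>
    intro hsv
    have hcond : ¬ ((Fin.natAdd k ⟨sv, hsv⟩ : Fin (k+m)) : ℕ) < k := by
      simp only [Fin.coe_natAdd]
      omega
    rw [outSeq_eq, outSeq_eq, extendF_apply_ge T g _ hcond]
    have hz : z (Fin.natAdd k ⟨sv, hsv⟩) = tailv z ⟨sv, hsv⟩ := rfl
    rw [hz]
    congr 1
    refine g_congr g ?_ _ _ (by simp only [Fin.coe_natAdd]; omega) _ _ ?_
    · congr 1
      funext s'
      exact outSeq_extendF_head T g z ⟨s'.1, s'.2.trans_le (Nat.le_add_right k m)⟩ s'.2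
    · intro r
      have hr2 : r.1 < (Fin.natAdd k ⟨sv, hsv⟩ : Fin (k+m)).1 - k := r.2
      have hrk : r.1 < sv := by
        simp only [Fin.coe_natAdd] at hr2
        omega
      have := ih r.1 hrk (by omega)
      exact this

lemma hash_family (P : Measure ℝ) [IsProbabilityMeasure P] (k M : ℕ) (hk : 1 ≤ k) (hM : 0 < M) :
    ∃ T : ℕ → (Fin k → ℝ) → Fin M, (∀ i, Measurable (T i)) ∧
      ∀ i j : ℕ, i ≠ j → (Measure.pi fun _ : Fin k => P) {u | T i u = T j u} ≤
        (P {x : ℝ | 0 < P {x}}) ^ k + ENNReal.ofReal (1/M) := by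
  classical
  set Eb : Set ℝ := {x : ℝ | 0 < P {x}} with hEbdef
  have hEbc : Eb.Countable := by
    have := Measure.countable_meas_pos_of_disjoint_iUnion (μ := P)
      (As := fun x : ℝ => ({x} : Set ℝ)) (fun x => measurableSet_singleton x)
      (fun x y hxy => by simp [Function.onFun, hxy])
    exact this
  have hEbm : MeasurableSet Eb := hEbc.measurableSet
  -- Borel isomorphism
  have huncount : ¬ Countable (Fin k → ℝ) := by
    intro hcnt
    have hinj : Function.Injective (fun r : ℝ => (fun _ : Fin k => r)) := by
      intro a b hab
      have := congrFun hab ⟨0, hk⟩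
      exact this
    have : Countable ℝ := hinj.countable
    exact (not_countable (α := ℝ)) this
  have huncount' : ¬ Countable ℝ := not_countable
  let e : (Fin k → ℝ) ≃ᵐ ℝ := PolishSpace.measurableEquivOfNotCountable huncount huncount'
  set Pk : Measure (Fin k → ℝ) := Measure.pi fun _ : Fin k => P with hPkdef
  have : IsProbabilityMeasure Pk := by infer_instance
  set μ : Measure ℝ := Pk.map e with hμdef
  have hμprob : IsProbabilityMeasure μ := Measure.isProbabilityMeasure_map e.measurable.aemeasurable
  set Atom : Set (Fin k → ℝ) := univ.pi (fun _ : Fin k => Eb) with hAtomdef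
  have hAtomm : MeasurableSet Atom := MeasurableSet.univ_pi (fun _ => hEbm)
  set A : Set ℝ := e.symm ⁻¹' Atom with hAdef
  have hAm : MeasurableSet A := e.symm.measurable hAtomm
  set ν : Measure ℝ := μ.restrict Aᶜ with hνdef
  have hνfin : IsFiniteMeasure ν := by
    constructor
    rw [hνdef, Measure.restrict_apply_univ]
    exact (measure_lt_top μ _)
  have hsingle : ∀ x : ℝ, x ∉ A → μ {x} = 0 := by
    intro x hx
    have h1 : μ {x} = Pk (e ⁻¹' {x}) := by
      rw [hμdef, Measure.map_apply e.measurable (measurableSet_singleton x)]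
    have h2 : e ⁻¹' {x} = {e.symm x} := by
      ext w
      simp only [mem_preimage, mem_singleton_iff]
      constructor
      · rintro rfl
        exact (e.symm_apply_apply w).symm
      · rintro rfl
        exact e.apply_symm_apply x
    have h3 : ({e.symm x} : Set (Fin k → ℝ)) = univ.pi (fun t => {e.symm x t}) :=
      (univ_pi_singleton _).symm
    rw [h1, h2, h3, Measure.pi_pi]
    have hnot : e.symm x ∉ Atom := hx
    rw [hAtomdef] at hnot
    simp only [Set.mem_pi, mem_univ, forall_true_left, not_forall] at hnot
    obtain ⟨t, ht⟩ := hnot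
    refine Finset.prod_eq_zero (Finset.mem_univ t) ?_
    have : ¬ 0 < P {e.symm x t} := ht
    exact le_antisymm (not_lt.1 this) zero_le
  have hνatoms : NullSingletonClass ν := by
    constructor
    intro x
    rw [hνdef, Measure.restrict_apply (measurableSet_singleton x)]
    by_cases hx : x ∈ A
    · have : ({x} : Set ℝ) ∩ Aᶜ = ∅ := by
        ext w
        simp only [mem_inter_iff, mem_singleton_iff, mem_compl_iff, mem_empty_iff_false,
          iff_false, not_and]
        rintro rfl
        simp [hx]
      rw [this, measure_empty]
    · exact le_antisymm (le_trans (measure_mono inter_subset_left) (le_of_eq (hsingle x hx)))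
        zero_le
  -- total masses
  have hAtommass : Pk Atom = (P Eb) ^ k := by
    rw [hPkdef, hAtomdef, Measure.pi_pi]
    simp [Finset.prod_const, Finset.card_univ]
  have hν1 : (ν univ).toReal ≤ 1 := by
    have : ν univ ≤ μ univ := by
      rw [hνdef, Measure.restrict_apply_univ]
      exact measure_mono (subset_univ _)
    have h2 : μ univ = 1 := measure_univ
    calc (ν univ).toReal ≤ (μ univ).toReal :=
      ENNReal.toReal_mono (measure_ne_top _ _) this
    _ = 1 := by rw [h2]; simp
  -- the hash functions
  set U : ℝ → ℝ := fun x => (ν (Iic x)).toReal / (ν univ).toReal with hUdef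
  have hUmeas : Measurable U := by
    have hmono : Monotone (fun x => (ν (Iic x)).toReal) := fun a b hab =>
      ENNReal.toReal_mono (measure_ne_top _ _) (measure_mono (Iic_subset_Iic.2 hab))
    exact hmono.measurable.div_const _
  refine ⟨fun i u => ⟨dig M (i+1) (U (e u)) % M, Nat.mod_lt _ hM⟩, ?_, ?_⟩
  · intro i
    exact (measurable_from_top (f := fun n : ℕ => (⟨n % M, Nat.mod_lt n hM⟩ : Fin M))).comp
      ((measurable_dig M (i+1)).comp (hUmeas.comp e.measurable))
  · -- collision bound
    have key : ∀ i j : ℕ, i < j → Pk {u | (⟨dig M (i+1) (U (e u)) % M, Nat.mod_lt _ hM⟩ : Fin M)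
        = ⟨dig M (j+1) (U (e u)) % M, Nat.mod_lt _ hM⟩} ≤ (P Eb) ^ k + ENNReal.ofReal (1/M) := by
      intro i j hij
      set C : Set ℝ := {x | dig M (i+1) (U x) = dig M (j+1) (U x)} with hCdef
      have hCm : MeasurableSet C := by
        have h1 : Measurable fun x => dig M (i+1) (U x) := (measurable_dig _ _).comp hUmeas
        have h2 : Measurable fun x => dig M (j+1) (U x) := (measurable_dig _ _).comp hUmeas
        exact measurableSet_eq_fun h1 h2
      have hdigM : ∀ (l : ℕ) (v : ℝ), dig M l v % M = dig M l v := fun l v =>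
        Nat.mod_eq_of_lt (by simpa [dig] using Nat.mod_lt (⌊v * (M:ℝ)^l⌋₊) hM)
      have hsub : {u | (⟨dig M (i+1) (U (e u)) % M, Nat.mod_lt _ hM⟩ : Fin M)
          = ⟨dig M (j+1) (U (e u)) % M, Nat.mod_lt _ hM⟩} ⊆ Atom ∪ (⇑e ⁻¹' (Aᶜ ∩ C)) := by
        intro u hu
        simp only [mem_setOf_eq, Fin.mk.injEq] at hu
        by_cases hA' : u ∈ Atom
        · exact Or.inl hA'
        · refine Or.inr ?_
          simp only [mem_preimage, mem_inter_iff, mem_compl_iff]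
          constructor
          · rw [hAdef]
            simp only [mem_preimage]
            rw [MeasurableEquiv.symm_apply_apply]
            exact hA'
          · rw [hCdef]
            simp only [mem_setOf_eq]
            rw [← hdigM (i+1) (U (e u)), ← hdigM (j+1) (U (e u))]
            exact hu
      refine le_trans (measure_mono hsub) (le_trans (measure_union_le _ _) ?_)
      have h1 : Pk (⇑e ⁻¹' (Aᶜ ∩ C)) = μ (Aᶜ ∩ C) := by
        rw [hμdef, Measure.map_apply e.measurable (hAm.compl.inter hCm)]
      have h2 : μ (Aᶜ ∩ C) = ν C := by
        rw [hνdef, Measure.restrict_apply hCm, inter_comm]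
      have h3 : ν C ≤ ENNReal.ofReal (1/M) :=
        dig_collision ν hM hν1 (Nat.le_add_left 1 i) (by omega)
      rw [hAtommass] at *
      exact add_le_add (le_of_eq hAtommass) (by rw [h1, h2]; exact h3)
    intro i j hij
    rcases Nat.lt_or_ge i j with h | h
    · exact key i j h
    · have hji : j < i := lt_of_le_of_ne h (Ne.symm hij)
      have hswap : {u | (⟨dig M (i+1) (U (e u)) % M, Nat.mod_lt _ hM⟩ : Fin M)
          = ⟨dig M (j+1) (U (e u)) % M, Nat.mod_lt _ hM⟩} =
          {u | (⟨dig M (j+1) (U (e u)) % M, Nat.mod_lt _ hM⟩ : Fin M)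
          = ⟨dig M (i+1) (U (e u)) % M, Nat.mod_lt _ hM⟩} := by
        ext u
        simp only [mem_setOf_eq]
        exact eq_comm
      rw [hswap]
      exact key j i hji

-- new lemmas
lemma extendF_meas {k m M : ℕ} (T : (Fin k → ℝ) → Fin M) (hT : Measurable T)
    (g : Fin M → FeedbackFn m) (hg : ∀ c, (g c).Meas) : (extendF T g).Meas := by
  intro t
  unfold extendF
  split
  · exact measurable_const
  · next h =>
    have hresA : Measurable fun y : Fin (t : ℕ) → ℝ =>
        (fun s : Fin k => y ⟨s.1, lt_of_lt_of_le s.2 (le_of_not_gt h)⟩) :=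
      measurable_pi_lambda _ fun s => measurable_pi_apply _
    have hresB : Measurable fun y : Fin (t : ℕ) → ℝ =>
        (fun r : Fin (((⟨t.1 - k, by omega⟩ : Fin m)) : ℕ) => y ⟨k + r.1, by
          have hh : r.1 < t.1 - k := r.2; omega⟩) :=
      measurable_pi_lambda _ fun s => measurable_pi_apply _
    have heq : (fun y : Fin (t : ℕ) → ℝ =>
        g (T (fun s : Fin k => y ⟨s.1, lt_of_lt_of_le s.2 (le_of_not_gt h)⟩))
          ⟨t.1 - k, by omega⟩
          (fun r => y ⟨k + r.1, by have hh : r.1 < t.1 - k := r.2; omega⟩)) =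
        (fun y => ∑ c : Fin M,
          if T (fun s : Fin k => y ⟨s.1, lt_of_lt_of_le s.2 (le_of_not_gt h)⟩) = c then
            g c ⟨t.1 - k, by omega⟩
              (fun r => y ⟨k + r.1, by have hh : r.1 < t.1 - k := r.2; omega⟩)
          else 0) := by
      funext y
      simp
    rw [heq]
    apply Finset.measurable_sum
    intro c _
    apply Measurable.ite
    · exact (hT.comp hresA) (measurableSet_singleton c)
    · exact (hg _ _).comp hresB
    · exact measurable_const

lemma extendF_power {k m M : ℕ} (T : (Fin k → ℝ) → Fin M) (g : Fin M → FeedbackFn m)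
    (Γ : ℝ) (hΓ : 0 ≤ Γ) (hg : ∀ c, AvgPower (g c) Γ) : AvgPower (extendF T g) Γ := by
  intro y
  rw [Fin.sum_univ_add (fun t : Fin (k+m) =>
    (extendF T g t fun s => y ⟨s.1, s.2.trans t.2⟩) ^ 2)]
  have h1 : ∀ s : Fin k, (extendF T g (Fin.castAdd m s)
      fun r => y ⟨r.1, r.2.trans (Fin.castAdd m s).2⟩) ^ 2 = 0 := by
    intro s
    have : ((Fin.castAdd m s : Fin (k+m)) : ℕ) < k := s.2
    simp only [extendF, dif_pos this]
    norm_num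
  rw [Finset.sum_congr rfl (fun s _ => h1 s), Finset.sum_const, smul_zero, zero_add]
  set c : Fin M := T (headv y) with hcdef
  have h2 : ∀ s : Fin m, (extendF T g (Fin.natAdd k s)
      fun r => y ⟨r.1, r.2.trans (Fin.natAdd k s).2⟩) ^ 2 =
      (g c s fun r => tailv y ⟨r.1, r.2.trans s.2⟩) ^ 2 := by
    intro s
    obtain ⟨sv, hsv⟩ := s
    congr 1
    have hcond : ¬ ((Fin.natAdd k ⟨sv, hsv⟩ : Fin (k+m)) : ℕ) < k := by
      simp only [Fin.coe_natAdd]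
      omega
    simp only [extendF, dif_neg hcond]
    refine g_congr g ?_ _ _ (by simp only [Fin.coe_natAdd]; omega) _ _ ?_
    · rw [hcdef]
      congr 1
    · intro r
      rfl
  rw [Finset.sum_congr rfl (fun s _ => h2 s)]
  have := hg c (tailv y)
  refine le_trans this ?_
  have hkm : (m : ℝ) ≤ ((k + m : ℕ) : ℝ) := by push_cast; linarith [Nat.cast_nonneg (α := ℝ) k]
  nlinarith


/-- **Theorem 1(1).** If the channel `W_P` with non-discrete additive white noise has
positive message transmission feedback capacity with average power constraint `Γ`, then
there is a blocklength `ns` such that for every `N ≥ 1` and every `n ≥ ns` there exists an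
`(n, N, λ₁, λ₂)` deterministic identification feedback code for `W_P` with average power
constraint `Γ` and `λ₁, λ₂ ≤ λ`. -/
theorem stmt0 (P : Measure ℝ) [IsProbabilityMeasure P]
    (hnd : P {x : ℝ | 0 < P {x}} < 1)
    (lam Γ : ℝ) (hlam : lam ∈ Set.Ioo (0 : ℝ) (1 / 2)) (hΓ : 0 < Γ)
    (hcap : PosCapAvg P Γ) :
    ∃ ns : ℕ, ∀ N : ℕ, 0 < N → ∀ n : ℕ, ns ≤ n →
      ∃ lam₁ lam₂ : ℝ, 0 ≤ lam₁ ∧ 0 ≤ lam₂ ∧ lam₁ ≤ lam ∧ lam₂ ≤ lam ∧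
        ∃ (f : Fin N → FeedbackFn n) (D : Fin N → Set (Fin n → ℝ)),
          IsIDCodeAvg P n N lam₁ lam₂ Γ f D := by
  classical
  obtain ⟨hlam0, hlam2⟩ := hlam
  obtain ⟨R, hR, hcap'⟩ := hcap
  obtain ⟨n₀, hn₀⟩ := hcap' (lam/2) (R/2) (by linarith) (by linarith)
  -- choice of k
  have hq1 : (P {x : ℝ | 0 < P {x}}).toReal < 1 := by
    have hne : P {x : ℝ | 0 < P {x}} ≠ ⊤ := measure_ne_top _ _
    have h2 := (ENNReal.toReal_lt_toReal hne (by simp : (1:ENNReal) ≠ ⊤)).2 hnd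
    simpa using h2
  have hq0 : 0 ≤ (P {x : ℝ | 0 < P {x}}).toReal := ENNReal.toReal_nonneg
  obtain ⟨k₀, hk₀⟩ := exists_pow_lt_of_lt_one (show (0:ℝ) < lam/4 by linarith) hq1
  set k := max 1 k₀ with hkdef
  have hk1 : 1 ≤ k := le_max_left _ _
  have hqk : (P {x : ℝ | 0 < P {x}}) ^ k ≤ ENNReal.ofReal (lam/4) := by
    have h1 : (P {x : ℝ | 0 < P {x}})^k
        = ENNReal.ofReal ((P {x : ℝ | 0 < P {x}}).toReal ^ k) := by
      rw [ENNReal.ofReal_pow hq0, ENNReal.ofReal_toReal (measure_ne_top _ _)]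
    rw [h1]
    apply ENNReal.ofReal_le_ofReal
    calc (P {x : ℝ | 0 < P {x}}).toReal ^ k ≤ (P {x : ℝ | 0 < P {x}}).toReal ^ k₀ :=
      pow_le_pow_of_le_one hq0 hq1.le (le_max_right 1 k₀)
    _ ≤ lam/4 := hk₀.le
  -- choice of m₁
  set K : ℝ := max 2 (4/lam) with hKdef
  have hK2 : (2:ℝ) ≤ K := le_max_left _ _
  have hKpos : (0:ℝ) < K := by linarith
  have hlogK : 0 < Real.logb 2 K := Real.logb_pos one_lt_two (by linarith)
  set m₁ : ℕ := max n₀ (⌈(Real.logb 2 K)/(R/2)⌉₊ + 1) with hm₁def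
  refine ⟨k + m₁, ?_⟩
  intro N hN n hn
  refine ⟨lam, lam, hlam0.le, hlam0.le, le_rfl, le_rfl, ?_⟩
  obtain ⟨m, rfl⟩ : ∃ m, n = k + m := ⟨n - k, by omega⟩
  have hmm₁ : m₁ ≤ m := by omega
  obtain ⟨M, hMpos, ⟨g, D', hMT⟩, hrate⟩ := hn₀ m (le_trans (le_max_left _ _) hmm₁)
  have hmpos : 0 < m := by
    have h1 : ⌈(Real.logb 2 K)/(R/2)⌉₊ + 1 ≤ m₁ := le_max_right _ _
    omega
  have hmR : (0:ℝ) < (m:ℝ) := by exact_mod_cast hmpos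
  have hMK : K ≤ (M:ℝ) := by
    have hm2 : ((⌈(Real.logb 2 K)/(R/2)⌉₊ : ℕ) : ℝ) ≤ (m:ℝ) := by
      have h1 : ⌈(Real.logb 2 K)/(R/2)⌉₊ ≤ m := by
        have := le_max_right n₀ (⌈(Real.logb 2 K)/(R/2)⌉₊ + 1)
        omega
      exact_mod_cast h1
    have hlogm : Real.logb 2 K ≤ (m:ℝ) * (R/2) := by
      have h1 : (Real.logb 2 K)/(R/2) ≤ (m:ℝ) := le_trans (Nat.le_ceil _) hm2
      rw [div_le_iff₀ (by linarith)] at h1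
      linarith
    have hrate' : (m:ℝ) * (R/2) ≤ Real.logb 2 M := by
      have h1 := (le_div_iff₀ hmR).1 hrate
      nlinarith
    have hMpos' : (0:ℝ) < M := by exact_mod_cast hMpos
    calc K = (2:ℝ) ^ (Real.logb 2 K) := (Real.rpow_logb two_pos (by norm_num) hKpos).symm
    _ ≤ (2:ℝ) ^ (Real.logb 2 M) := by
        apply (Real.rpow_le_rpow_left_iff (by norm_num : (1:ℝ) < 2)).2
        linarith
    _ = M := Real.rpow_logb two_pos (by norm_num) hMpos'
  have hMlam : (1:ℝ)/M ≤ lam/4 := by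
    have h4 : (4/lam) ≤ (M:ℝ) := le_trans (le_max_right _ _) hMK
    have h5 : (0:ℝ) < 4/lam := by positivity
    calc (1:ℝ)/M ≤ 1/(4/lam) := one_div_le_one_div_of_le h5 h4
    _ = lam/4 := by rw [one_div_div]
  -- hash family
  obtain ⟨T, hTmeas, hTcol⟩ := hash_family P k M hk1 hMpos
  have hcol : ∀ i j : ℕ, i ≠ j →
      (Measure.pi fun _ : Fin k => P) {u | T i u = T j u} ≤ ENNReal.ofReal (lam/2) := by
    intro i j hij
    refine le_trans (hTcol i j hij) ?_
    calc (P {x : ℝ | 0 < P {x}})^k + ENNReal.ofReal (1/M)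
        ≤ ENNReal.ofReal (lam/4) + ENNReal.ofReal (lam/4) :=
          add_le_add hqk (ENNReal.ofReal_le_ofReal hMlam)
    _ = ENNReal.ofReal (lam/2) := by
        rw [← ENNReal.ofReal_add (by linarith) (by linarith)]
        congr 1
        ring
  obtain ⟨hgprop, hgdisj, hgerr⟩ := hMT
  set Pk : Measure (Fin k → ℝ) := Measure.pi fun _ : Fin k => P with hPkdef
  set Pm : Measure (Fin m → ℝ) := Measure.pi fun _ : Fin m => P with hPmdef
  have hPkprob : IsProbabilityMeasure Pk := by rw [hPkdef]; infer_instance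
  have hPmprob : IsProbabilityMeasure Pm := by rw [hPmdef]; infer_instance
  have hsplit := measurePreserving_split P k m
  -- the code
  set F : Fin N → FeedbackFn (k+m) := fun i => extendF (T i.1) g with hFdef
  set D : Fin N → Set (Fin (k+m) → ℝ) := fun i => ⋃ c : Fin M,
    (headv ⁻¹' (T i.1 ⁻¹' {c})) ∩ (tailv ⁻¹' (D' c)) with hDdef
  have hFmeas : ∀ i, (F i).Meas := fun i =>
    extendF_meas _ (hTmeas i.1) g (fun c => (hgprop c).1)
  have houtmeas : ∀ i, Measurable (outSeq (F i)) := fun i => meas_outSeq _ (hFmeas i)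
  have hDm : ∀ i, MeasurableSet (D i) := by
    intro i
    apply MeasurableSet.iUnion
    intro c
    exact (measurable_headv ((hTmeas i.1) (measurableSet_singleton c))).inter
      (measurable_tailv (hgprop c).2.2)
  -- head/tail of output
  have hhead : ∀ (i : Fin N) (z : Fin (k+m) → ℝ), headv (outSeq (F i) z) = headv z := by
    intro i z
    funext s
    exact outSeq_extendF_head (T i.1) g z (Fin.castAdd m s) s.2
  have htail : ∀ (i : Fin N) (z : Fin (k+m) → ℝ),
      tailv (outSeq (F i) z) = outSeq (g (T i.1 (headv z))) (tailv z) := by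
    intro i z
    funext s
    exact outSeq_extendF_tail (T i.1) g z s
  -- membership characterization
  have hmemD : ∀ (i j : Fin N) (z : Fin (k+m) → ℝ),
      outSeq (F i) z ∈ D j ↔ outSeq (g (T i.1 (headv z))) (tailv z) ∈ D' (T j.1 (headv z)) := by
    intro i j z
    rw [hDdef]
    simp only [mem_iUnion, mem_inter_iff, mem_preimage, mem_singleton_iff]
    constructor
    · rintro ⟨c, hc1, hc2⟩
      rw [hhead i z] at hc1
      rw [htail i z] at hc2
      rw [hc1]
      exact hc2
    · intro h
      refine ⟨T j.1 (headv z), ?_, ?_⟩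
      · rw [hhead i z]
      · rw [htail i z]
        exact h
  -- error of the first kind
  have herr1 : ∀ i : Fin N, Wn P (F i) (D i)ᶜ ≤ ENNReal.ofReal lam := by
    intro i
    rw [Wn, Measure.map_apply (houtmeas i) (hDm i).compl]
    have hpre : (outSeq (F i)) ⁻¹' (D i)ᶜ = (fun z => (headv z, tailv z)) ⁻¹'
        (⋃ c ∈ (Finset.univ : Finset (Fin M)),
          (T i.1 ⁻¹' {c}) ×ˢ ((outSeq (g c)) ⁻¹' (D' c)ᶜ)) := by
      ext z
      simp only [mem_preimage, mem_compl_iff, hmemD i i z, Finset.mem_univ, iUnion_true,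
        mem_iUnion, mem_prod, mem_singleton_iff]
      constructor
      · intro h
        exact ⟨T i.1 (headv z), rfl, h⟩
      · rintro ⟨c, hc1, hc2⟩
        rw [hc1]
        exact hc2
    rw [hpre, hsplit.measure_preimage]
    · rw [prod_biUnion_rect Pk Pm Finset.univ _ _
        (fun c => (hTmeas i.1) (measurableSet_singleton c))
        (fun c => (meas_outSeq (g c) (hgprop c).1) (hgprop c).2.2.compl)
        (fun c _ c' _ hcc' => Set.disjoint_left.2 (fun u hu hu' => hcc' (by
          simp only [mem_preimage, mem_singleton_iff] at hu hu'
          rw [← hu, ← hu'])))]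
      have hterm : ∀ c ∈ (Finset.univ : Finset (Fin M)),
          Pk (T i.1 ⁻¹' {c}) * Pm ((outSeq (g c)) ⁻¹' (D' c)ᶜ) ≤
          Pk (T i.1 ⁻¹' {c}) * ENNReal.ofReal (lam/2) := by
        intro c _
        apply mul_le_mul_right
        have : Pm ((outSeq (g c)) ⁻¹' (D' c)ᶜ) = Wn P (g c) (D' c)ᶜ := by
          rw [Wn, Measure.map_apply (meas_outSeq (g c) (hgprop c).1) (hgprop c).2.2.compl]
        rw [this]
        exact hgerr c
      refine le_trans (Finset.sum_le_sum hterm) ?_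
      rw [← Finset.sum_mul]
      have hsum1 : ∑ c : Fin M, Pk (T i.1 ⁻¹' {c}) = 1 := by
        rw [← measure_biUnion_finset (fun c _ c' _ hcc' => Set.disjoint_left.2
          (fun u hu hu' => hcc' (by
            simp only [mem_preimage, mem_singleton_iff] at hu hu'
            rw [← hu, ← hu'])))
          (fun c _ => (hTmeas i.1) (measurableSet_singleton c))]
        have : (⋃ c ∈ (Finset.univ : Finset (Fin M)), T i.1 ⁻¹' {c}) = univ := by
          ext u
          simp
        rw [this]
        exact measure_univ
      rw [hsum1, one_mul]
      exact ENNReal.ofReal_le_ofReal (by linarith)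
    · exact (MeasurableSet.biUnion (Finset.univ : Finset (Fin M)).countable_toSet
        (fun c _ => ((hTmeas i.1) (measurableSet_singleton c)).prod
          ((meas_outSeq (g c) (hgprop c).1) (hgprop c).2.2.compl))).nullMeasurableSet
  -- error of the second kind
  have herr2 : ∀ i j : Fin N, i ≠ j → Wn P (F i) (D j) ≤ ENNReal.ofReal lam := by
    intro i j hij
    rw [Wn, Measure.map_apply (houtmeas i) (hDm j)]
    set A : Fin M × Fin M → Set (Fin k → ℝ) := fun p =>
      (T i.1 ⁻¹' {p.1}) ∩ (T j.1 ⁻¹' {p.2}) with hAdef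
    set B : Fin M × Fin M → Set (Fin m → ℝ) := fun p =>
      (outSeq (g p.1)) ⁻¹' (D' p.2) with hBdef
    have hAm : ∀ p, MeasurableSet (A p) := fun p =>
      ((hTmeas i.1) (measurableSet_singleton p.1)).inter
        ((hTmeas j.1) (measurableSet_singleton p.2))
    have hBm : ∀ p, MeasurableSet (B p) := fun p =>
      (meas_outSeq (g p.1) (hgprop p.1).1) (hgprop p.2).2.2
    have hAdisj : Set.PairwiseDisjoint ((Finset.univ : Finset (Fin M × Fin M)) : Set _) A := by
      intro p _ p' _ hpp'
      rw [Function.onFun, Set.disjoint_left]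
      rintro u ⟨hu1, hu2⟩ ⟨hv1, hv2⟩
      simp only [mem_preimage, mem_singleton_iff] at hu1 hu2 hv1 hv2
      exact hpp' (Prod.ext (by rw [← hu1, ← hv1]) (by rw [← hu2, ← hv2]))
    have hpre : (outSeq (F i)) ⁻¹' (D j) = (fun z => (headv z, tailv z)) ⁻¹'
        (⋃ p ∈ (Finset.univ : Finset (Fin M × Fin M)), A p ×ˢ B p) := by
      ext z
      simp only [mem_preimage, hmemD i j z, Finset.mem_univ, iUnion_true, mem_iUnion,
        mem_prod, hAdef, hBdef, mem_inter_iff, mem_preimage, mem_singleton_iff]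
      constructor
      · intro h
        exact ⟨(T i.1 (headv z), T j.1 (headv z)), ⟨rfl, rfl⟩, h⟩
      · rintro ⟨p, ⟨hp1, hp2⟩, hp3⟩
        rw [hp1, hp2]
        exact hp3
    rw [hpre, hsplit.measure_preimage]
    · rw [prod_biUnion_rect Pk Pm Finset.univ A B hAm hBm hAdisj]
      have hterm : ∀ p ∈ (Finset.univ : Finset (Fin M × Fin M)),
          Pk (A p) * Pm (B p) ≤
          (if p.1 = p.2 then Pk (A p) else Pk (A p) * ENNReal.ofReal (lam/2)) := by
        intro p _
        by_cases hp : p.1 = p.2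
        · rw [if_pos hp]
          calc Pk (A p) * Pm (B p) ≤ Pk (A p) * 1 := mul_le_mul_right prob_le_one _
          _ = Pk (A p) := mul_one _
        · rw [if_neg hp]
          apply mul_le_mul_right
          have hBsub : B p ⊆ (outSeq (g p.1)) ⁻¹' (D' p.1)ᶜ := by
            apply preimage_mono
            exact (hgdisj p.1 p.2 hp).subset_compl_left
          calc Pm (B p) ≤ Pm ((outSeq (g p.1)) ⁻¹' (D' p.1)ᶜ) := measure_mono hBsub
          _ = Wn P (g p.1) (D' p.1)ᶜ := by
              rw [Wn, Measure.map_apply (meas_outSeq (g p.1) (hgprop p.1).1)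
                (hgprop p.1).2.2.compl]
          _ ≤ ENNReal.ofReal (lam/2) := hgerr p.1
      refine le_trans (Finset.sum_le_sum hterm) ?_
      rw [Finset.sum_ite]
      have hpart1 : (∑ p ∈ Finset.univ.filter (fun p : Fin M × Fin M => p.1 = p.2), Pk (A p))
          ≤ ENNReal.ofReal (lam/2) := by
        rw [← measure_biUnion_finset (hAdisj.subset (by simp [Set.subset_def]))
          (fun p _ => hAm p)]
        refine le_trans (measure_mono ?_) (hcol i.1 j.1 (fun h => hij (Fin.val_injective h)))
        intro u hu
        simp only [mem_iUnion, Finset.mem_filter, Finset.mem_univ, true_and] at hu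
        obtain ⟨p, hp, hu1, hu2⟩ := hu
        simp only [mem_preimage, mem_singleton_iff] at hu1 hu2
        simp only [mem_setOf_eq]
        rw [hu1, hu2, hp]
      have hpart2 : (∑ p ∈ Finset.univ.filter (fun p : Fin M × Fin M => ¬ p.1 = p.2),
          Pk (A p) * ENNReal.ofReal (lam/2)) ≤ ENNReal.ofReal (lam/2) := by
        rw [← Finset.sum_mul]
        have h1 : (∑ p ∈ Finset.univ.filter (fun p : Fin M × Fin M => ¬ p.1 = p.2), Pk (A p))
            ≤ ∑ p : Fin M × Fin M, Pk (A p) :=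
          Finset.sum_le_sum_of_subset (Finset.filter_subset _ _)
        have h2 : (∑ p : Fin M × Fin M, Pk (A p)) = 1 := by
          rw [← measure_biUnion_finset hAdisj (fun p _ => hAm p)]
          have : (⋃ p ∈ (Finset.univ : Finset (Fin M × Fin M)), A p) = univ := by
            ext u
            simp only [Finset.mem_univ, iUnion_true, mem_iUnion, mem_univ, iff_true, hAdef,
              mem_inter_iff, mem_preimage, mem_singleton_iff]
            exact ⟨(T i.1 u, T j.1 u), rfl, rfl⟩
          rw [this]
          exact measure_univ
        calc (∑ p ∈ Finset.univ.filter (fun p : Fin M × Fin M => ¬ p.1 = p.2), Pk (A p))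
              * ENNReal.ofReal (lam/2) ≤ 1 * ENNReal.ofReal (lam/2) :=
            mul_le_mul_left (le_trans h1 (le_of_eq h2)) _
        _ = ENNReal.ofReal (lam/2) := one_mul _
      calc _ ≤ ENNReal.ofReal (lam/2) + ENNReal.ofReal (lam/2) := add_le_add hpart1 hpart2
      _ = ENNReal.ofReal lam := by
          rw [← ENNReal.ofReal_add (by linarith) (by linarith)]
          congr 1
          ring
    · exact (MeasurableSet.biUnion (Finset.univ : Finset (Fin M × Fin M)).countable_toSet
        (fun p _ => (hAm p).prod (hBm p))).nullMeasurableSet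
  exact ⟨F, D, fun i => ⟨hFmeas i, extendF_power _ g Γ hΓ.le (fun c => (hgprop c).2.1), hDm i⟩,
    herr1, herr2⟩

end
end

section
/- Let P be a non-discrete probability measure on ℝ with atom set Ē = {x ∈ ℝ : P({x}) > 0}, let 0 < η < 1 and let L be a positive integer. Then for all sufficiently large n (specifically, for every n with P(Ē)^n ≤ η) there exists a measurable mapping π : ℝⁿ → {1,…,L} ∪ {∞} such that, when (Z₁,…,Zₙ) is distributed according to the n-fold product measure P^⊗n: (i) P^⊗n[π(Z₁,…,Zₙ) = l | π(Z₁,…,Zₙ) ≠ ∞] = 1/L for every l ∈ {1,…,L}, and (ii) P^⊗n[π(Z₁,…,Zₙ) = ∞] ≤ η. -/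
open MeasureTheory ProbabilityTheory
open scoped ENNReal
open Set Filter
open scoped Topology

lemma aux_cont (ν : Measure ℝ) [IsFiniteMeasure ν] [NullSingletonClass ν] :
    Continuous (fun x => (ν (Set.Iic x)).toReal) := by
  have hmono : Monotone fun x => (ν (Set.Iic x)).toReal := fun x y hxy =>
    ENNReal.toReal_mono (measure_ne_top _ _) (measure_mono (Set.Iic_subset_Iic.2 hxy))
  rw [continuous_iff_continuousAt]
  intro x
  rw [ContinuousAt, tendsto_order]
  constructor
  · intro a ha
    have h1 : Set.Iio x = ⋃ n : ℕ, Set.Iic (x - 1 / (n + 1)) := by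
      ext y
      simp only [Set.mem_Iio, Set.mem_iUnion, Set.mem_Iic]
      constructor
      · intro hy
        obtain ⟨n, hn⟩ := exists_nat_one_div_lt (sub_pos.2 hy)
        exact ⟨n, by linarith⟩
      · rintro ⟨n, hn⟩
        have : (0:ℝ) < 1 / (n + 1) := by positivity
        linarith
    have hU : Tendsto (fun n : ℕ => ν (Set.Iic (x - 1 / (n + 1)))) atTop
        (𝓝 (ν (Set.Iio x))) := by
      rw [h1]
      exact tendsto_measure_iUnion_atTop (fun i j hij => Set.Iic_subset_Iic.2 (by
        have : (1:ℝ) / (j + 1) ≤ 1 / (i + 1) := by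
          have hij' : (i:ℝ) ≤ j := Nat.cast_le.2 hij
          gcongr
        linarith))
    have hIio : ν (Set.Iio x) = ν (Set.Iic x) := measure_congr (Iio_ae_eq_Iic)
    rw [hIio] at hU
    have hU' : Tendsto (fun n : ℕ => (ν (Set.Iic (x - 1 / (n + 1)))).toReal) atTop
        (𝓝 (ν (Set.Iic x)).toReal) :=
      (ENNReal.tendsto_toReal (measure_ne_top _ _)).comp hU
    obtain ⟨N, hN⟩ := (hU'.eventually (eventually_gt_nhds ha)).exists
    have hx : x - 1 / (N + 1) < x := by
      have : (0:ℝ) < 1 / (N + 1) := by positivity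
      linarith
    filter_upwards [Ioi_mem_nhds hx] with y hy
    exact lt_of_lt_of_le hN (hmono hy.le)
  · intro b hb
    have h1 : Set.Iic x = ⋂ n : ℕ, Set.Iic (x + 1 / (n + 1)) := by
      ext y
      simp only [Set.mem_Iic, Set.mem_iInter]
      constructor
      · intro hy n
        have : (0:ℝ) < 1 / (n + 1) := by positivity
        linarith
      · intro h
        by_contra hxy
        obtain ⟨n, hn⟩ := exists_nat_one_div_lt (sub_pos.2 (not_le.1 hxy))
        have := h n
        linarith
    have hU : Tendsto (fun n : ℕ => ν (Set.Iic (x + 1 / (n + 1)))) atTop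
        (𝓝 (ν (Set.Iic x))) := by
      conv in ν (Set.Iic x) => rw [h1]
      refine tendsto_measure_iInter_atTop (fun n => measurableSet_Iic.nullMeasurableSet)
        (fun i j hij => Set.Iic_subset_Iic.2 (by
          have : (1:ℝ) / (j + 1) ≤ 1 / (i + 1) := by
            have hij' : (i:ℝ) ≤ j := Nat.cast_le.2 hij
            gcongr
          linarith)) ⟨0, measure_ne_top _ _⟩
    have hU' : Tendsto (fun n : ℕ => (ν (Set.Iic (x + 1 / (n + 1)))).toReal) atTop
        (𝓝 (ν (Set.Iic x)).toReal) :=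
      (ENNReal.tendsto_toReal (measure_ne_top _ _)).comp hU
    obtain ⟨N, hN⟩ := (hU'.eventually (eventually_lt_nhds hb)).exists
    have hx : x < x + 1 / (N + 1) := by
      have : (0:ℝ) < 1 / (N + 1) := by positivity
      linarith
    filter_upwards [Iio_mem_nhds hx] with y hy
    exact lt_of_le_of_lt (hmono hy.le) hN

lemma aux_quantile (ν : Measure ℝ) [IsFiniteMeasure ν] [NullSingletonClass ν] {c : ℝ≥0∞}
    (h0 : 0 < c) (hc : c < ν Set.univ) : ∃ t : ℝ, ν (Set.Iic t) = c := by
  have hg := aux_cont ν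
  have hcT : c ≠ ⊤ := hc.trans_le le_top |>.ne
  have hcr0 : 0 < c.toReal := ENNReal.toReal_pos h0.ne' hcT
  -- upper side
  have h2 : Tendsto (fun x => (ν (Set.Iic x)).toReal) atTop (𝓝 (ν Set.univ).toReal) :=
    (ENNReal.tendsto_toReal (measure_ne_top _ _)).comp (tendsto_measure_Iic_atTop ν)
  have hcu : c.toReal < (ν Set.univ).toReal :=
    ENNReal.toReal_lt_toReal hcT (measure_ne_top _ _) |>.2 hc
  obtain ⟨x₂, hx₂⟩ := (h2.eventually (eventually_gt_nhds hcu)).exists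
  -- lower side
  have h3 : Tendsto (fun n : ℕ => ν (Set.Iic (-(n:ℝ)))) atTop (𝓝 (ν (⋂ n : ℕ, Set.Iic (-(n:ℝ))))) := by
    refine tendsto_measure_iInter_atTop (fun n => measurableSet_Iic.nullMeasurableSet)
      (fun i j hij => Set.Iic_subset_Iic.2 (by exact_mod_cast neg_le_neg (Nat.cast_le.2 hij)))
      ⟨0, measure_ne_top _ _⟩
  have hempty : (⋂ n : ℕ, Set.Iic (-(n:ℝ))) = ∅ := by
    ext y
    simp only [Set.mem_iInter, Set.mem_Iic, Set.mem_empty_iff_false, iff_false, not_forall]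
    obtain ⟨n, hn⟩ := exists_nat_gt (-y)
    exact ⟨n, by push_neg; linarith⟩
  rw [hempty, measure_empty] at h3
  have h3' : Tendsto (fun n : ℕ => (ν (Set.Iic (-(n:ℝ)))).toReal) atTop (𝓝 0) := by
    have := (ENNReal.tendsto_toReal (by simp : (0:ℝ≥0∞) ≠ ⊤)).comp h3
    simpa [Function.comp_def] using this
  obtain ⟨N, hN⟩ := (h3'.eventually (eventually_lt_nhds hcr0)).exists
  have hmem : c.toReal ∈ Set.Icc ((ν (Set.Iic (-(N:ℝ)))).toReal) ((ν (Set.Iic x₂)).toReal) :=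
    ⟨hN.le, hx₂.le⟩
  obtain ⟨t, ht⟩ := intermediate_value_univ (-(N:ℝ)) x₂ hg hmem
  refine ⟨t, ?_⟩
  rw [← ENNReal.toReal_eq_toReal_iff' (measure_ne_top _ _) hcT]
  exact ht


lemma aux_partition : ∀ (L : ℕ), 0 < L → ∀ (ν : Measure ℝ), IsFiniteMeasure ν → NullSingletonClass ν →
    ∃ φ : ℝ → ℕ, Measurable φ ∧ (∀ y, 1 ≤ φ y ∧ φ y ≤ L) ∧
      ∀ l, 1 ≤ l → l ≤ L → ν {y | φ y = l} = ν Set.univ / L := by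
  intro L
  induction L with
  | zero => omega
  | succ L ih =>
    intro _ ν hfin hna
    haveI := hfin; haveI := hna
    by_cases hL0 : L = 0
    · subst hL0
      refine ⟨fun _ => 1, measurable_const, fun y => ⟨le_refl _, le_refl _⟩, ?_⟩
      intro l hl1 hl2
      have hl : l = 1 := le_antisymm hl2 hl1
      subst hl
      simp
    · have hLpos : 0 < L := Nat.pos_of_ne_zero hL0
      by_cases hm : ν Set.univ = 0
      · refine ⟨fun _ => 1, measurable_const, fun y => ⟨le_refl _, Nat.succ_le_succ (Nat.zero_le _)⟩, ?_⟩
        intro l hl1 hl2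
        have h1 : ν {y | (fun _ => 1) y = l} ≤ ν Set.univ := measure_mono (Set.subset_univ _)
        rw [hm] at h1 ⊢
        simp [le_zero_iff.1 h1]
      · have hLne : ((L:ℝ≥0∞) + 1) ≠ 0 := by simp
        have hLnetop : ((L:ℝ≥0∞) + 1) ≠ ⊤ := by simp [ENNReal.add_ne_top]
        have h0 : 0 < ν Set.univ / ((L:ℝ≥0∞) + 1) :=
          ENNReal.div_pos hm hLnetop
        have hlt : ν Set.univ / ((L:ℝ≥0∞) + 1) < ν Set.univ := by
          refine lt_of_le_of_lt (ENNReal.div_le_div_left ?_ _)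
            (ENNReal.half_lt_self hm (measure_ne_top _ _))
          have : (2:ℕ) ≤ L + 1 := by omega
          exact_mod_cast this
        obtain ⟨t, ht⟩ := aux_quantile ν h0 hlt
        set m := ν Set.univ with hm_def
        set ν' := ν.restrict (Set.Ioi t) with hν'
        obtain ⟨φ', hφ'm, hφ'b, hφ'⟩ := ih hLpos ν' inferInstance inferInstance
        have hν'univ : ν' Set.univ = m - m / ((L:ℝ≥0∞) + 1) := by
          rw [hν', Measure.restrict_apply MeasurableSet.univ, Set.univ_inter,
            ← Set.compl_Iic, measure_compl measurableSet_Iic (measure_ne_top _ _), ht]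
        have key : ν' Set.univ / (L:ℝ≥0∞) = m / ((L:ℝ≥0∞) + 1) := by
          rw [hν'univ]
          have hsub : m - m / ((L:ℝ≥0∞) + 1) = m * L / ((L:ℝ≥0∞) + 1) := by
            have hadd : m * L / ((L:ℝ≥0∞) + 1) + m / ((L:ℝ≥0∞) + 1) = m := by
              rw [ENNReal.div_add_div_same]
              have : m * L + m = m * ((L:ℝ≥0∞) + 1) := by ring
              rw [this, mul_div_assoc, ENNReal.div_self hLne hLnetop, mul_one]
            exact ENNReal.sub_eq_of_eq_add (ENNReal.div_lt_top (measure_ne_top _ _) hLne).ne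
              hadd.symm
          rw [hsub, div_eq_mul_inv, div_eq_mul_inv, div_eq_mul_inv, mul_right_comm,
            mul_assoc m, ENNReal.mul_inv_cancel (by exact_mod_cast hL0) (by simp), mul_one]
        classical
        refine ⟨fun y => if y ≤ t then 1 else φ' y + 1, ?_, ?_, ?_⟩
        · exact Measurable.ite measurableSet_Iic measurable_const (hφ'm.add measurable_const)
        · intro y
          by_cases hy : y ≤ t
          · simp only [hy, if_true]; omega
          · simp only [hy, if_false]; have := hφ'b y; omega
        · intro l hl1 hl2
          by_cases hl : l = 1
          · subst hl
            have hset : {y : ℝ | (if y ≤ t then 1 else φ' y + 1) = 1} = Set.Iic t := by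
              ext y
              simp only [Set.mem_setOf_eq, Set.mem_Iic]
              by_cases hy : y ≤ t
              · simp [hy]
              · simp only [hy, if_false, iff_false]
                have := hφ'b y
                omega
            rw [hset, ht]
            norm_cast
          · have hl2' : 2 ≤ l := by omega
            have hset : {y : ℝ | (if y ≤ t then 1 else φ' y + 1) = l}
                = {y | φ' y = l - 1} ∩ Set.Ioi t := by
              ext y
              simp only [Set.mem_setOf_eq, Set.mem_inter_iff, Set.mem_Ioi]
              by_cases hy : y ≤ t
              · simp only [hy, if_true]
                constructor
                · intro h; omega
                · rintro ⟨-, h1⟩; exact absurd hy (not_le.2 h1)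
              · simp only [hy, if_false]
                have hty : t < y := not_le.1 hy
                constructor
                · intro h; exact ⟨by omega, hty⟩
                · rintro ⟨h, -⟩; omega
            have hms : MeasurableSet {y : ℝ | φ' y = l - 1} :=
              hφ'm (measurableSet_singleton _)
            rw [hset, ← Measure.restrict_apply hms, ← hν']
            rw [hφ' (l-1) (by omega) (by omega), key]
            norm_cast


/-- **Common randomness generation (Lemma 4).** Let `P` be a non-discrete probability
measure on `ℝ` with atom set `Ē`, `0 < η < 1` and `L ≥ 1`. For every `n` with
`P(Ē)^n ≤ η` there is a measurable map `π : ℝⁿ → {1,…,L} ∪ {∞}` (here `∞` is encoded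
as `0`) such that conditionally on `π ≠ ∞` the value of `π` is uniform on `{1,…,L}`,
and `π = ∞` has probability at most `η` under the product measure `P^⊗n`. -/
theorem stmt6 (P : Measure ℝ) [IsProbabilityMeasure P]
    (Ebar : Set ℝ) (hEbar : Ebar = {x : ℝ | 0 < P {x}})
    (hnd : P Ebar < 1)
    (η : ℝ) (hη : η ∈ Set.Ioo (0 : ℝ) 1)
    (L : ℕ) (hL : 0 < L) :
    ∀ n : ℕ, 0 < n → P Ebar ^ n ≤ ENNReal.ofReal η →
      ∃ π : (Fin n → ℝ) → ℕ,
        Measurable π ∧ (∀ z, π z ≤ L) ∧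
        (∀ l : ℕ, 1 ≤ l → l ≤ L →
          ((Measure.pi fun _ : Fin n => P)[|{z | π z ≠ 0}]) {z | π z = l}
            = 1 / (L : ℝ≥0∞)) ∧
        (Measure.pi fun _ : Fin n => P) {z | π z = 0} ≤ ENNReal.ofReal η := by
  intro n hn hle
  classical
  set μ : Measure (Fin n → ℝ) := Measure.pi fun _ : Fin n => P with hμ
  haveI : IsProbabilityMeasure μ := by rw [hμ]; infer_instance
  -- Ebar is countable, hence measurable
  have hcount : Ebar.Countable := by
    rw [hEbar]
    have := P.countable_meas_level_set_pos (measurable_id : Measurable (id : ℝ → ℝ))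
    simpa [Set.setOf_eq_eq_singleton] using this
  have hEm : MeasurableSet Ebar := hcount.measurableSet
  -- the set A of z with all coordinates atoms
  set A : Set (Fin n → ℝ) := Set.pi Set.univ (fun _ : Fin n => Ebar) with hA
  have hAm : MeasurableSet A := MeasurableSet.univ_pi fun _ => hEm
  have hμA : μ A = P Ebar ^ n := by
    rw [hμ, hA, Measure.pi_pi]
    simp [Finset.prod_const]
  have hμAlt : μ A < 1 := lt_of_le_of_lt (hμA ▸ hle) (ENNReal.ofReal_lt_one.2 hη.2)
  have hμAc : μ Aᶜ = 1 - μ A := prob_compl_eq_one_sub hAm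
  have hμAc0 : μ Aᶜ ≠ 0 := by
    rw [hμAc]
    simp only [ne_eq, tsub_eq_zero_iff_le, not_le]
    exact hμAlt
  have hμAcT : μ Aᶜ ≠ ⊤ := measure_ne_top _ _
  -- embedding into ℝ
  set f : (Fin n → ℝ) → ℝ := MeasureTheory.embeddingReal (Fin n → ℝ) with hf_def
  have hf : MeasurableEmbedding f := MeasureTheory.measurableEmbedding_embeddingReal _
  set ν : Measure ℝ := (μ.restrict Aᶜ).map f with hν
  haveI hνfin : IsFiniteMeasure ν := by
    constructor
    rw [hν, hf.map_apply]
    exact measure_lt_top _ _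
  haveI hνna : NullSingletonClass ν := by
    constructor
    intro y
    rw [hν, hf.map_apply]
    by_cases hy : ∃ z, f z = y
    · obtain ⟨z, hz⟩ := hy
      have hpre : f ⁻¹' {y} = {z} := by
        ext w
        simp only [Set.mem_preimage, Set.mem_singleton_iff]
        constructor
        · intro hw; exact hf.injective (hw.trans hz.symm)
        · rintro rfl; exact hz
      rw [hpre, Measure.restrict_apply (measurableSet_singleton z)]
      by_cases hzA : z ∈ A
      · have : ({z} : Set (Fin n → ℝ)) ∩ Aᶜ = ∅ := by
          ext w
          simp only [Set.mem_inter_iff, Set.mem_singleton_iff, Set.mem_compl_iff,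
            Set.mem_empty_iff_false, iff_false, not_and]
          rintro rfl
          simpa using hzA
        rw [this, measure_empty]
      · have hsub : ({z} : Set (Fin n → ℝ)) ∩ Aᶜ ⊆ {z} := Set.inter_subset_left
        refine le_antisymm (le_trans (measure_mono hsub) ?_) zero_le
        have hz_sing : ({z} : Set (Fin n → ℝ)) = Set.pi Set.univ (fun i => {z i}) := by
          rw [Set.univ_pi_singleton]
        rw [hz_sing, hμ, Measure.pi_pi]
        obtain ⟨i, hi⟩ : ∃ i, z i ∉ Ebar := by
          by_contra h
          push_neg at h
          exact hzA fun i _ => h i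
        have hPzi : P {z i} = 0 := by
          by_contra h
          exact hi (by rw [hEbar]; exact Set.mem_setOf_eq ▸ zero_le.lt_of_ne (Ne.symm h))
        rw [Finset.prod_eq_zero (Finset.mem_univ i) hPzi]
    · have : f ⁻¹' {y} = ∅ := by
        ext w
        simp only [Set.mem_preimage, Set.mem_singleton_iff, Set.mem_empty_iff_false, iff_false]
        intro hw
        exact hy ⟨w, hw⟩
      rw [this, measure_empty]
  have hνuniv : ν Set.univ = μ Aᶜ := by
    rw [hν, hf.map_apply]
    simp
  -- partition
  obtain ⟨φ, hφm, hφb, hφ⟩ := aux_partition L hL ν hνfin hνna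
  refine ⟨fun z => if z ∈ A then 0 else φ (f z), ?_, ?_, ?_, ?_⟩
  · exact Measurable.ite hAm measurable_const (hφm.comp hf.measurable)
  · intro z
    by_cases hz : z ∈ A
    · simp [hz]
    · simp only [hz, if_false]
      exact (hφb (f z)).2
  · intro l hl1 hl2
    have hBne : {z | (if z ∈ A then 0 else φ (f z)) ≠ 0} = Aᶜ := by
      ext z
      by_cases hz : z ∈ A <;> simp [hz]
      have := (hφb (f z)).1; omega
    have hBl : {z | (if z ∈ A then 0 else φ (f z)) = l} = Aᶜ ∩ f ⁻¹' {y | φ y = l} := by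
      ext z
      by_cases hz : z ∈ A <;> simp [hz]
      omega
    have hs : MeasurableSet (f ⁻¹' {y : ℝ | φ y = l}) :=
      hf.measurable (hφm (measurableSet_singleton l))
    have hμl : μ {z | (if z ∈ A then 0 else φ (f z)) = l} = μ Aᶜ / L := by
      rw [hBl, Set.inter_comm, ← Measure.restrict_apply hs, ← hf.map_apply, ← hν,
        hφ l hl1 hl2, hνuniv]
    rw [hBne, ProbabilityTheory.cond_apply hAm.compl]
    have hinter : Aᶜ ∩ {z | (if z ∈ A then 0 else φ (f z)) = l}
        = {z | (if z ∈ A then 0 else φ (f z)) = l} := by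
      rw [hBl, ← Set.inter_assoc, Set.inter_self]
    rw [hinter, hμl, div_eq_mul_inv, ← mul_assoc, ENNReal.inv_mul_cancel hμAc0 hμAcT,
      one_mul, one_div]
  · have h0 : {z | (if z ∈ A then 0 else φ (f z)) = 0} = A := by
      ext z
      by_cases hz : z ∈ A <;> simp [hz]
      have := (hφb (f z)).1; omega
    rw [h0, hμA]
    exact hle
end

section
/- Let M, L and N be positive integers, let λ ∈ (0, 1/2) satisfy M > 2/λ, and set c = λ/2 − 1/M > 0. If λLc²/(2 ln 2) > log₂ N, then there exists a family of N functions k₁,…,k_N : {1,…,L} → {1,…,M} such that |{l ∈ {1,…,L} : k_i(l) = k_j(l)}| ≤ λL/2 for every pair (i, j) of distinct indices in {1,…,N}. -/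
open Finset

lemma bad_count (M L u : ℕ) (hM : 0 < M) (r : ℝ) (hr : 1 ≤ r) (f : Fin L → Fin M) :
    ((univ.filter fun g : Fin L → Fin M =>
        u ≤ (univ.filter fun l => g l = f l).card).card : ℝ) * r ^ u
      ≤ ((M : ℝ) - 1 + r) ^ L := by
  have hM1 : (0:ℝ) ≤ (M:ℝ) - 1 := by
    have : (1:ℝ) ≤ M := by exact_mod_cast hM
    linarith
  have hr0 : (0:ℝ) < r := lt_of_lt_of_le one_pos hr
  set Bad := univ.filter fun g : Fin L → Fin M =>
      u ≤ (univ.filter fun l => g l = f l).card with hBad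
  set T := univ.powerset.filter fun A : Finset (Fin L) => u ≤ A.card with hT
  have hcard : Bad.card = ∑ A ∈ T,
      (Bad.filter fun g => (univ.filter fun l => g l = f l) = A).card := by
    apply card_eq_sum_card_fiberwise
    intro g hg
    simp only [hT, mem_coe, mem_filter, mem_powerset]
    exact ⟨subset_univ _, (mem_filter.mp (mem_coe.mp hg)).2⟩
  have hfiber : ∀ A ∈ T, ((Bad.filter fun g => (univ.filter fun l => g l = f l) = A).card : ℝ)
      ≤ ((M : ℝ) - 1) ^ (L - A.card) := by
    intro A hA
    have hsub : (Bad.filter fun g => (univ.filter fun l => g l = f l) = A)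
        ⊆ Fintype.piFinset (fun l => if l ∈ A then {f l} else {f l}ᶜ) := by
      intro g hg
      rw [Fintype.mem_piFinset]
      intro l
      have hAg : (univ.filter fun l => g l = f l) = A := (mem_filter.mp hg).2
      by_cases hl : l ∈ A
      · simp only [hl, if_true, mem_singleton]
        have : l ∈ univ.filter fun l => g l = f l := hAg ▸ hl
        exact (mem_filter.mp this).2
      · simp only [hl, if_false, mem_compl, mem_singleton]
        intro hEq
        exact hl (hAg ▸ (mem_filter.mpr ⟨mem_univ l, hEq⟩))
    have hcard2 : (Fintype.piFinset (fun l => if l ∈ A then ({f l} : Finset (Fin M)) else {f l}ᶜ)).card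
        = (M - 1) ^ (L - A.card) := by
      rw [Fintype.card_piFinset]
      have : ∀ l, (if l ∈ A then ({f l} : Finset (Fin M)) else {f l}ᶜ).card
          = if l ∈ A then 1 else M - 1 := by
        intro l
        by_cases hl : l ∈ A <;> simp [hl, card_compl, Fintype.card_fin]
      simp only [this]
      rw [Finset.prod_ite, Finset.prod_const, Finset.prod_const, one_pow, one_mul]
      congr 1
      have : univ.filter (fun x => ¬ x ∈ A) = Aᶜ := by ext x; simp
      rw [this, card_compl, Fintype.card_fin]
    calc ((Bad.filter fun g => (univ.filter fun l => g l = f l) = A).card : ℝ)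
        ≤ (((M - 1) ^ (L - A.card) : ℕ) : ℝ) := by
          exact_mod_cast card_le_card hsub |>.trans (le_of_eq hcard2)
      _ = ((M : ℝ) - 1) ^ (L - A.card) := by
          push_cast [Nat.cast_sub hM]
          ring
  -- now the main chain
  have hTsub : T ⊆ univ.powerset := filter_subset _ _
  calc ((Bad.card : ℕ) : ℝ) * r ^ u
      = ∑ A ∈ T, ((Bad.filter fun g => (univ.filter fun l => g l = f l) = A).card : ℝ) * r ^ u := by
        rw [hcard]; push_cast; rw [Finset.sum_mul]
    _ ≤ ∑ A ∈ T, ((M : ℝ) - 1) ^ (L - A.card) * r ^ A.card := by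
        apply Finset.sum_le_sum
        intro A hA
        have hu : u ≤ A.card := (mem_filter.mp hA).2
        exact mul_le_mul (hfiber A hA) (pow_le_pow_right₀ hr hu) (by positivity) (by positivity)
    _ ≤ ∑ A ∈ univ.powerset, ((M : ℝ) - 1) ^ (L - A.card) * r ^ A.card := by
        apply Finset.sum_le_sum_of_subset_of_nonneg hTsub
        intro A _ _
        positivity
    _ = ((M : ℝ) - 1 + r) ^ L := by
        have hpa := Finset.prod_add (fun _ : Fin L => r) (fun _ : Fin L => (M : ℝ) - 1)
          (univ : Finset (Fin L))
        simp only [Finset.prod_const] at hpa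
        have hL : ((univ : Finset (Fin L)).card) = L := by simp
        rw [hL] at hpa
        rw [show (M : ℝ) - 1 + r = r + ((M : ℝ) - 1) by ring, hpa]
        apply Finset.sum_congr rfl
        intro A hA
        have : (univ \ A).card = L - A.card := by
          rw [← Finset.compl_eq_univ_sdiff, card_compl, Fintype.card_fin]
        rw [this, mul_comm]

lemma exists_family {F : Type*} [Fintype F] [Nonempty F] [DecidableEq F] (N : ℕ)
    (good : F → F → Prop) [DecidableRel good]
    (hsymm : ∀ f g, good f g → good g f)
    (B : ℝ) (hB : ∀ f, ((univ.filter fun g => ¬ good f g).card : ℝ) ≤ B)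
    (hNB : (N : ℝ) * B < (Fintype.card F : ℝ)) :
    ∃ k : Fin N → F, ∀ i j, i ≠ j → good (k i) (k j) := by
  have hB0 : 0 ≤ B := le_trans (Nat.cast_nonneg _) (hB (Classical.arbitrary F))
  suffices h : ∀ n, n ≤ N → ∃ k : Fin n → F, ∀ i j, i ≠ j → good (k i) (k j) by
    exact h N le_rfl
  intro n
  induction n with
  | zero => exact fun _ => ⟨fun i => i.elim0, fun i => i.elim0⟩
  | succ n ih =>
    intro hn
    obtain ⟨k, hk⟩ := ih (le_trans (Nat.le_succ n) hn)
    set BadU := univ.biUnion (fun i : Fin n => univ.filter fun g => ¬ good (k i) g)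
      with hBadU
    have hlt : BadU.card < Fintype.card F := by
      have h2 : (BadU.card : ℝ) < (Fintype.card F : ℝ) := by
        calc (BadU.card : ℝ)
            ≤ ((∑ i : Fin n, (univ.filter fun g => ¬ good (k i) g).card : ℕ) : ℝ) :=
              Nat.cast_le.mpr card_biUnion_le
          _ = ∑ i : Fin n, ((univ.filter fun g => ¬ good (k i) g).card : ℝ) :=
              Nat.cast_sum _ _
          _ ≤ ∑ _i : Fin n, B := Finset.sum_le_sum (fun i _ => hB (k i))
          _ = n * B := by rw [Finset.sum_const, card_univ, Fintype.card_fin, nsmul_eq_mul]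
          _ ≤ N * B := by
              apply mul_le_mul_of_nonneg_right _ hB0
              exact_mod_cast le_trans (Nat.le_succ n) hn
          _ < _ := hNB
      exact_mod_cast h2
    have hne : BadUᶜ.Nonempty := by
      rw [← Finset.card_pos, Finset.card_compl]
      omega
    obtain ⟨g, hg⟩ := hne
    have hgood : ∀ i : Fin n, good (k i) g := by
      intro i
      by_contra hcon
      exact (Finset.mem_compl.mp hg)
        (mem_biUnion.mpr ⟨i, mem_univ i, mem_filter.mpr ⟨mem_univ g, hcon⟩⟩)
    refine ⟨Fin.snoc k g, ?_⟩
    intro i j hij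
    by_cases hi : i = Fin.last n
    · by_cases hj : j = Fin.last n
      · exact absurd (hi.trans hj.symm) hij
      · obtain ⟨j', rfl⟩ := Fin.exists_castSucc_eq.mpr hj
        subst hi
        simp only [Fin.snoc_last, Fin.snoc_castSucc]
        exact hsymm _ _ (hgood j')
    · obtain ⟨i', rfl⟩ := Fin.exists_castSucc_eq.mpr hi
      by_cases hj : j = Fin.last n
      · subst hj
        simp only [Fin.snoc_last, Fin.snoc_castSucc]
        exact hgood i'
      · obtain ⟨j', rfl⟩ := Fin.exists_castSucc_eq.mpr hj
        simp only [Fin.snoc_castSucc]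
        exact hk i' j' (fun h => hij (by rw [h]))

set_option maxHeartbeats 1600000 in
lemma numeric_bound (M L N : ℕ) (hM : 0 < M) (hL : 0 < L) (hN : 0 < N)
    (lam : ℝ) (hlam : lam ∈ Set.Ioo (0 : ℝ) (1 / 2)) (hMlam : 2 / lam < M)
    (c : ℝ) (hc : c = lam / 2 - 1 / M) (hcpos : 0 < c)
    (hLN : Real.logb 2 N < lam * L * c ^ 2 / (2 * Real.log 2))
    (t : ℕ) (hts : t = ⌊lam * L / 2⌋₊) (y : ℝ) (hys : y = c / lam)
    (r : ℝ) (hrs : r = 1 + y) :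
    (N : ℝ) * ((M:ℝ) - 1 + r) ^ L < r ^ (t + 1) * (M:ℝ) ^ L := by
  obtain ⟨hlam0, hlam2⟩ := hlam
  have hMR : (0:ℝ) < M := by exact_mod_cast hM
  have hy0 : 0 < y := hys ▸ div_pos hcpos hlam0
  have hr1 : 1 < r := by rw [hrs]; linarith
  have hr0 : 0 < r := by linarith
  have hrpow : 0 < r ^ (t + 1) := pow_pos hr0 _
  have hMr : (0:ℝ) < (M:ℝ) - 1 + r := by linarith
  have hlog2 : (0:ℝ) < Real.log 2 := Real.log_pos (by norm_num)
  have hlnN : Real.log N < lam * L * c ^ 2 / 2 := by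
    rw [Real.logb, div_lt_div_iff₀ hlog2 (by positivity)] at hLN
    nlinarith [hLN, hlog2]
  have hMc : (1:ℝ) / M = lam / 2 - c := by rw [hc]; ring
  have hylam : y * lam = c := by rw [hys]; field_simp
  have hN0 : (0:ℝ) < N := by exact_mod_cast hN
  rw [← Real.log_lt_log_iff (by positivity) (by positivity),
    Real.log_mul (ne_of_gt hN0) (by positivity), Real.log_mul (by positivity) (by positivity),
    Real.log_pow, Real.log_pow, Real.log_pow]
  have hlog1 : Real.log ((M:ℝ) - 1 + r) ≤ Real.log M + y / M := by
    have h1 : (0:ℝ) < ((M:ℝ) - 1 + r) / M := by positivity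
    have h2 := Real.log_le_sub_one_of_pos h1
    rw [Real.log_div (by positivity) (ne_of_gt hMR)] at h2
    have h3 : ((M:ℝ) - 1 + r) / M - 1 = y / M := by rw [hrs]; field_simp; ring
    linarith
  have hlogr : y - y ^ 2 ≤ Real.log r := by
    have h1 : (0:ℝ) < 1 / r := by positivity
    have h2 := Real.log_le_sub_one_of_pos h1
    rw [Real.log_div one_ne_zero (ne_of_gt hr0), Real.log_one] at h2
    have h3 : 1 - 1/r ≤ Real.log r := by linarith
    have h4 : y - y ^ 2 ≤ (r - 1) / r := by
      rw [le_div_iff₀ hr0, hrs]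
      have hy3 : (0:ℝ) ≤ y ^ 3 := by positivity
      nlinarith [hy3]
    have h4' : (r - 1) / r = 1 - 1 / r := by field_simp
    linarith
  have hlogr0 : 0 ≤ Real.log r := Real.log_nonneg (le_of_lt hr1)
  have htlow : lam * L / 2 < ((t:ℝ) + 1) := by
    rw [hts]
    exact_mod_cast Nat.lt_floor_add_one (lam * L / 2)
  have htr : lam * L / 2 * Real.log r ≤ ((t:ℝ) + 1) * Real.log r :=
    mul_le_mul_of_nonneg_right (le_of_lt htlow) hlogr0
  have hL0 : (0:ℝ) ≤ L := Nat.cast_nonneg L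
  have hchain : Real.log N + (L:ℝ) * (y / M) < lam * L / 2 * (y - y ^ 2) := by
    have h5 : (L:ℝ) * (y / M) = L * y * (lam / 2 - c) := by
      rw [show (L:ℝ) * (y / M) = L * y * (1 / M) by ring, hMc]
    have h6 : lam * L * c ^ 2 / 2 + (L:ℝ) * y * (lam / 2 - c) ≤ lam * L / 2 * (y - y ^ 2) := by
      rw [← hylam]
      have h1l : (0:ℝ) ≤ 1 - lam ^ 2 := by nlinarith
      have hkey9 : lam * L / 2 * (y - y ^ 2) -
          (lam * L * (y * lam) ^ 2 / 2 + (L:ℝ) * y * (lam / 2 - y * lam))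
          = lam * (L:ℝ) * y ^ 2 * (1 - lam ^ 2) / 2 := by ring
      have hpos9 : (0:ℝ) ≤ lam * (L:ℝ) * y ^ 2 * (1 - lam ^ 2) / 2 := by
        have h99 := mul_nonneg (mul_nonneg (mul_nonneg (le_of_lt hlam0) hL0) (sq_nonneg y)) h1l
        linarith only [h99]
      rw [← sub_nonneg, hkey9]
      exact hpos9
    linarith only [hlnN, h6, h5]
  have hmul1 : (L:ℝ) * Real.log ((M:ℝ) - 1 + r) ≤ (L:ℝ) * Real.log M + (L:ℝ) * (y / M) := by
    have := mul_le_mul_of_nonneg_left hlog1 hL0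
    linarith only [this]
  have hmul2 : lam * L / 2 * (y - y ^ 2) ≤ lam * L / 2 * Real.log r :=
    mul_le_mul_of_nonneg_left hlogr (by positivity)
  push_cast
  linarith only [hchain, hmul1, hmul2, htr]

/-- **Lemma 7 (existence of a good family of coloring functions).** Let `M, L, N ≥ 1`,
`λ ∈ (0,1/2)` with `M > 2/λ`, and `c = λ/2 − 1/M > 0`. If `λLc²/(2 ln 2) > log₂ N`,
then there exist `N` functions `k₁,…,k_N : {1,…,L} → {1,…,M}` such that any two
distinct ones agree in at most `λL/2` points. -/
theorem stmt8 (M L N : ℕ) (hM : 0 < M) (hL : 0 < L) (hN : 0 < N)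
    (lam : ℝ) (hlam : lam ∈ Set.Ioo (0 : ℝ) (1 / 2)) (hMlam : 2 / lam < M)
    (c : ℝ) (hc : c = lam / 2 - 1 / M) (hcpos : 0 < c)
    (hLN : Real.logb 2 N < lam * L * c ^ 2 / (2 * Real.log 2)) :
    ∃ k : Fin N → Fin L → Fin M, ∀ i j : Fin N, i ≠ j →
      (Nat.card {l : Fin L // k i l = k j l} : ℝ) ≤ lam * L / 2 := by
  obtain ⟨t, hts⟩ : ∃ t : ℕ, t = ⌊lam * L / 2⌋₊ := ⟨_, rfl⟩
  obtain ⟨y, hys⟩ : ∃ y : ℝ, y = c / lam := ⟨_, rfl⟩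
  obtain ⟨r, hrs⟩ : ∃ r : ℝ, r = 1 + y := ⟨_, rfl⟩
  have hlam0 : 0 < lam := hlam.1
  have hy0 : 0 < y := hys ▸ div_pos hcpos hlam0
  have hr1 : 1 < r := by rw [hrs]; linarith
  have hr0 : (0:ℝ) < r := by linarith
  have hrpow : 0 < r ^ (t + 1) := pow_pos hr0 _
  haveI : Nonempty (Fin L → Fin M) := ⟨fun _ => ⟨0, hM⟩⟩
  have key := numeric_bound M L N hM hL hN lam hlam hMlam c hc hcpos hLN t hts y hys r hrs
  have hcardF : ((Fintype.card (Fin L → Fin M)) : ℝ) = (M:ℝ) ^ L := by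
    rw [Fintype.card_fun, Fintype.card_fin, Fintype.card_fin]
    push_cast
    rfl
  obtain ⟨k, hk⟩ := @exists_family (Fin L → Fin M) _ ‹_› _ N
    (fun f g => (univ.filter fun l => f l = g l).card ≤ t)
    (fun _ _ => Nat.decLe _ _)
    (by
      intro f g h
      have hflip : (univ.filter fun l => g l = f l) = (univ.filter fun l => f l = g l) := by
        ext l; simp [eq_comm]
      simpa [hflip] using h)
    (((M : ℝ) - 1 + r) ^ L / r ^ (t + 1))
    (by
      intro f
      have h1 := bad_count M L (t + 1) hM r (le_of_lt hr1) f
      have hsets : (univ.filter fun g : Fin L → Fin M =>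
            ¬ ((univ.filter fun l => f l = g l).card ≤ t))
          = (univ.filter fun g : Fin L → Fin M =>
            t + 1 ≤ (univ.filter fun l => g l = f l).card) := by
        apply filter_congr
        intro g _
        have hflip : (univ.filter fun l => f l = g l) = (univ.filter fun l => g l = f l) := by
          ext l; simp [eq_comm]
        rw [hflip, not_le]
        exact ⟨Nat.succ_le_of_lt, Nat.lt_of_succ_le⟩
      rw [hsets, le_div_iff₀ hrpow]
      exact h1)
    (by
      rw [hcardF, show (N:ℝ) * (((M : ℝ) - 1 + r) ^ L / r ^ (t + 1))
          = (N:ℝ) * ((M : ℝ) - 1 + r) ^ L / r ^ (t + 1) from by ring,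
        div_lt_iff₀ hrpow]
      linarith [key])
  refine ⟨k, ?_⟩
  intro i j hij
  have h := hk i j hij
  have hcc : Nat.card {l : Fin L // k i l = k j l}
      = (univ.filter fun l => k i l = k j l).card := by
    rw [Nat.card_eq_fintype_card, Fintype.card_subtype]
  rw [hcc]
  have h1 : ((univ.filter fun l => k i l = k j l).card : ℝ) ≤ (t : ℝ) := by exact_mod_cast h
  have h2 : (t : ℝ) ≤ lam * L / 2 := by
    rw [hts]
    exact Nat.floor_le (by positivity)
  linarith
end

section
/- Let M, L and N be positive integers, let λ ∈ (0, 1/2) satisfy M > 2/λ, and set c = λ/2 − 1/M > 0. Let (K₁,…,K_N) be an N-tuple of functions from {1,…,L} to {1,…,M} chosen according to the uniform probability measure on the set of all such N-tuples (equivalently, all NL values K_i(l) are i.i.d. uniform on {1,…,M}). Then the probability that there exist distinct indices i, j ∈ {1,…,N} with |{l ∈ {1,…,L} : K_i(l) = K_j(l)}| > λL/2 is at most N(N−1)·2^{−(L λ c²)/ln 2}. -/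
private def prodFstEquiv {A B : Type*} (Q : A → Prop) :
    {x : A × B // Q x.1} ≃ {a : A // Q a} × B where
  toFun x := (⟨x.1.1, x.2⟩, x.1.2)
  invFun y := ⟨(y.1.1, y.2), y.1.2⟩
  left_inv x := rfl
  right_inv y := rfl

private def moveEquiv {n : ℕ} {V : Type*} (i j : Fin n) (hij : i ≠ j) :
    ((Fin n → V) × (V × V)) ≃ ((V × V) × (Fin n → V)) where
  toFun x := ((x.1 i, x.1 j), Function.update (Function.update x.1 i x.2.1) j x.2.2)
  invFun y := (Function.update (Function.update y.2 i y.1.1) j y.1.2, (y.2 i, y.2 j))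
  left_inv := by
    rintro ⟨K, f, g⟩
    refine Prod.ext ?_ (Prod.ext ?_ ?_)
    · funext l
      by_cases hlj : l = j
      · subst hlj; simp
      · by_cases hli : l = i
        · subst hli
          simp [Function.update_of_ne hij, Function.update_of_ne hlj]
        · simp [Function.update_of_ne hli, Function.update_of_ne hlj]
    · simp [Function.update_of_ne hij]
    · simp
  right_inv := by
    rintro ⟨⟨f, g⟩, K⟩
    refine Prod.ext (Prod.ext ?_ ?_) ?_
    · simp [Function.update_of_ne hij]
    · simp
    · funext l
      by_cases hlj : l = j
      · subst hlj; simp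
      · by_cases hli : l = i
        · subst hli
          simp [Function.update_of_ne hij, Function.update_of_ne hlj]
        · simp [Function.update_of_ne hli, Function.update_of_ne hlj]

private lemma card_split {n : ℕ} {V : Type*} (i j : Fin n) (hij : i ≠ j)
    (R : V → V → Prop) :
    Nat.card {K : Fin n → V // R (K i) (K j)} * Nat.card (V × V) =
      Nat.card {p : V × V // R p.1 p.2} * Nat.card (Fin n → V) := by
  have e : {K : Fin n → V // R (K i) (K j)} × (V × V) ≃
      {p : V × V // R p.1 p.2} × (Fin n → V) :=
    (prodFstEquiv fun K : Fin n → V => R (K i) (K j)).symm.trans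
      ((Equiv.subtypeEquiv (moveEquiv i j hij) fun x => Iff.rfl).trans
        (prodFstEquiv fun p : V × V => R p.1 p.2))
  simpa [Nat.card_prod] using Nat.card_congr e

private lemma exp_quad {x : ℝ} (h1 : 0 ≤ x) (h2 : x ≤ 1) :
    Real.exp x ≤ 1 + x + x ^ 2 := by
  have h := Real.exp_bound' h1 h2 (n := 3) (by norm_num)
  refine h.trans ?_
  rw [Finset.sum_range_succ, Finset.sum_range_succ, Finset.sum_range_succ]
  norm_num [Nat.factorial]
  nlinarith

private lemma chernoff (M L : ℕ) (hM : 0 < M) (lam c : ℝ)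
    (hlam1 : 0 < lam) (hlam2 : lam < 1/2) (hcpos : 0 < c)
    (hc1 : (1:ℝ)/M = lam/2 - c) :
    (Nat.card {p : (Fin L → Fin M) × (Fin L → Fin M) //
        lam * L / 2 < (Nat.card {l : Fin L // p.1 l = p.2 l} : ℝ)} : ℝ)
      ≤ Real.exp (-((L:ℝ) * lam * c^2)) *
        (Fintype.card ((Fin L → Fin M) × (Fin L → Fin M)) : ℝ) := by
  classical
  set V := Fin L → Fin M with hV
  set w : ℝ := Real.exp (2*c) with hw
  set a : ℝ := lam * L / 2 with ha
  have hc14 : c < 1/4 := by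
    have hMpos : (0:ℝ) < 1/(M:ℝ) := by positivity
    nlinarith
  set T : Finset (V × V) := Finset.univ.filter
      (fun p => a < (Nat.card {l : Fin L // p.1 l = p.2 l} : ℝ)) with hT
  have hcardT : (Nat.card {p : V × V //
      a < (Nat.card {l : Fin L // p.1 l = p.2 l} : ℝ)}) = T.card := by
    rw [Nat.card_eq_fintype_card, hT, Fintype.card_subtype]
  -- rewrite exp of agreement as a product
  have hprod : ∀ p : V × V, Real.exp (2*c * (Nat.card {l : Fin L // p.1 l = p.2 l} : ℝ))
      = ∏ l : Fin L, (if p.1 l = p.2 l then w else 1) := by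
    intro p
    have hagree : (Nat.card {l : Fin L // p.1 l = p.2 l} : ℝ)
        = ∑ l : Fin L, (if p.1 l = p.2 l then (1:ℝ) else 0) := by
      rw [Finset.sum_boole, Nat.card_eq_fintype_card, Fintype.card_subtype]
    rw [hagree, Finset.mul_sum, Real.exp_sum]
    refine Finset.prod_congr rfl fun l _ => ?_
    by_cases h : p.1 l = p.2 l <;> simp [h, hw]
  -- sum over all pairs
  have hsum : ∑ p : V × V, ∏ l : Fin L, (if p.1 l = p.2 l then w else 1)
      = ((M:ℝ) * (w - 1 + M)) ^ L := by
    have e1 : ∑ p : V × V, ∏ l : Fin L, (if p.1 l = p.2 l then w else 1)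
        = ∑ h : Fin L → Fin M × Fin M, ∏ l : Fin L, (if (h l).1 = (h l).2 then w else 1) :=
      (Fintype.sum_equiv (Equiv.arrowProdEquivProdArrow (Fin L) (fun _ => Fin M) (fun _ => Fin M))
        (fun h : Fin L → Fin M × Fin M => ∏ l : Fin L, (if (h l).1 = (h l).2 then w else 1))
        (fun p : V × V => ∏ l : Fin L, (if p.1 l = p.2 l then w else 1)) (fun h => rfl)).symm
    have e2 : ∑ h : Fin L → Fin M × Fin M, ∏ l : Fin L, (if (h l).1 = (h l).2 then w else 1)
        = ∏ _l : Fin L, ∑ v : Fin M × Fin M, (if v.1 = v.2 then w else 1) := by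
      rw [← Fintype.piFinset_univ]
      exact Finset.sum_prod_piFinset (Finset.univ : Finset (Fin M × Fin M))
        (fun _ v => if v.1 = v.2 then w else 1)
    rw [e1, e2]
    have hinner : ∑ v : Fin M × Fin M, (if v.1 = v.2 then w else 1)
        = (M:ℝ) * (w - 1 + M) := by
      have : ∀ v : Fin M × Fin M, (if v.1 = v.2 then w else 1)
          = (if v.1 = v.2 then w - 1 else 0) + 1 := by
        intro v; by_cases h : v.1 = v.2 <;> simp [h]
      rw [Finset.sum_congr rfl fun v _ => this v, Finset.sum_add_distrib]
      rw [Fintype.sum_prod_type]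
      simp [Finset.sum_ite_eq, Finset.card_univ]
      ring
    rw [Finset.prod_congr rfl fun (l : Fin L) _ => hinner, Finset.prod_const,
      Finset.card_univ, Fintype.card_fin]
  -- Chernoff bound chain
  have hstep1 : (T.card : ℝ) * Real.exp (2*c*a)
      ≤ ∑ p : V × V, ∏ l : Fin L, (if p.1 l = p.2 l then w else 1) := by
    have h1 : (T.card : ℝ) * Real.exp (2*c*a)
        = ∑ _p ∈ T, Real.exp (2*c*a) := by
      rw [Finset.sum_const, nsmul_eq_mul]
    rw [h1]
    refine le_trans (Finset.sum_le_sum fun p hp => ?_)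
      (Finset.sum_le_sum_of_subset_of_nonneg (Finset.filter_subset _ _)
        (fun p _ _ => Finset.prod_nonneg fun l _ => by positivity))
    rw [← hprod p]
    have hap : a < (Nat.card {l : Fin L // p.1 l = p.2 l} : ℝ) :=
      (Finset.mem_filter.mp hp).2
    exact Real.exp_le_exp.mpr (by nlinarith)
  rw [hsum] at hstep1
  -- sizes
  have hQ : (Fintype.card (V × V) : ℝ) = ((M:ℝ)^L) * ((M:ℝ)^L) := by
    simp [hV, Fintype.card_prod]
  have hMne : (M:ℝ) ≠ 0 := Nat.cast_ne_zero.mpr hM.ne'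
  have hw1 : 1 ≤ w := by
    rw [hw]; nlinarith [Real.add_one_le_exp (2*c)]
  have hfact : ((M:ℝ) * (w - 1 + M)) ^ L
      = ((M:ℝ)^L * (M:ℝ)^L) * (1 + (w-1) * (1/M)) ^ L := by
    rw [← mul_pow, ← mul_pow]
    congr 1
    field_simp
    ring
  have hpow : (1 + (w-1) * (1/M)) ^ L ≤ Real.exp ((L:ℝ) * ((w-1) * (1/M))) := by
    have hb : 0 ≤ (w-1) * (1/M) := mul_nonneg (by linarith) (by positivity)
    calc (1 + (w-1) * (1/M)) ^ L ≤ (Real.exp ((w-1) * (1/M))) ^ L := by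
          apply pow_le_pow_left₀ (by linarith)
          linarith [Real.add_one_le_exp ((w-1) * (1/M))]
      _ = Real.exp ((L:ℝ) * ((w-1) * (1/M))) := by
          rw [← Real.exp_nat_mul]
  have hexpineq : Real.exp ((L:ℝ) * ((w-1) * (1/M)))
      ≤ Real.exp (2*c*a) * Real.exp (-((L:ℝ) * lam * c^2)) := by
    rw [← Real.exp_add, Real.exp_le_exp, hc1, ha]
    have hwb : w - 1 ≤ 2*c + 4*c^2 := by
      have := exp_quad (x := 2*c) (by linarith) (by linarith)
      rw [hw]; nlinarith
    have hLpos : (0:ℝ) ≤ (L:ℝ) := Nat.cast_nonneg L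
    have hmc : (0:ℝ) < lam/2 - c := by rw [← hc1]; positivity
    have hcore : (w - 1) * (lam/2 - c) ≤ c*lam - lam*c^2 := by nlinarith
    nlinarith
  -- combine
  rw [hcardT, hQ]
  have hexp2ca : (0:ℝ) < Real.exp (2*c*a) := Real.exp_pos _
  have hfinal : (T.card : ℝ) * Real.exp (2*c*a)
      ≤ Real.exp (-((L:ℝ) * lam * c^2)) * ((M:ℝ)^L * (M:ℝ)^L) * Real.exp (2*c*a) := by
    calc (T.card : ℝ) * Real.exp (2*c*a) ≤ ((M:ℝ) * (w - 1 + M)) ^ L := hstep1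
      _ = ((M:ℝ)^L * (M:ℝ)^L) * (1 + (w-1) * (1/M)) ^ L := hfact
      _ ≤ ((M:ℝ)^L * (M:ℝ)^L) * Real.exp ((L:ℝ) * ((w-1) * (1/M))) := by
          apply mul_le_mul_of_nonneg_left hpow (by positivity)
      _ ≤ ((M:ℝ)^L * (M:ℝ)^L) * (Real.exp (2*c*a) * Real.exp (-((L:ℝ) * lam * c^2))) := by
          apply mul_le_mul_of_nonneg_left hexpineq (by positivity)
      _ = Real.exp (-((L:ℝ) * lam * c^2)) * ((M:ℝ)^L * (M:ℝ)^L) * Real.exp (2*c*a) := by ring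
  exact le_of_mul_le_mul_right hfinal hexp2ca

/-- **Union bound over all pairs of coloring functions.** Let `M, L, N ≥ 1`,
`λ ∈ (0,1/2)` with `M > 2/λ`, and `c = λ/2 − 1/M > 0`. If an `N`-tuple `(K₁,…,K_N)` of
functions `{1,…,L} → {1,…,M}` is chosen uniformly at random (i.e., all `NL` values are
i.i.d. uniform on `{1,…,M}`), then the probability that some pair of distinct indices
`i ≠ j` satisfies `|{l : K_i(l) = K_j(l)}| > λL/2` is at most
`N(N−1)·2^{−Lλc²/ln 2}`. -/
theorem stmt9 (M L N : ℕ) (hM : 0 < M) (hL : 0 < L) (hN : 0 < N)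
    (lam : ℝ) (hlam : lam ∈ Set.Ioo (0 : ℝ) (1 / 2)) (hMlam : 2 / lam < M)
    (c : ℝ) (hc : c = lam / 2 - 1 / M) (hcpos : 0 < c) :
    (Nat.card {K : Fin N → Fin L → Fin M // ∃ i j : Fin N, i ≠ j ∧
        lam * L / 2 < (Nat.card {l : Fin L // K i l = K j l} : ℝ)} : ℝ)
      / (Fintype.card (Fin N → Fin L → Fin M) : ℝ)
      ≤ (N : ℝ) * ((N : ℝ) - 1) * 2 ^ (-((L : ℝ) * lam * c ^ 2) / Real.log 2) := by
  classical
  obtain ⟨hlam1, hlam2⟩ := hlam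
  haveI : Nonempty (Fin M) := ⟨⟨0, hM⟩⟩
  have hc1 : (1:ℝ)/M = lam/2 - c := by rw [hc]; ring
  have hchern := chernoff M L hM lam c hlam1 (by linarith) hcpos hc1
  set V := Fin L → Fin M with hV
  set D : ℝ := (Fintype.card (Fin N → V) : ℝ) with hD
  set P : ℝ := (Fintype.card (V × V) : ℝ) with hP
  have hDpos : 0 < D := by rw [hD]; exact_mod_cast Fintype.card_pos
  have hPpos : 0 < P := by rw [hP]; exact_mod_cast Fintype.card_pos
  set Tc : ℝ := (Nat.card {p : V × V //
      lam * L / 2 < (Nat.card {l : Fin L // p.1 l = p.2 l} : ℝ)} : ℝ) with hTcDef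
  -- hchern : Tc ≤ Real.exp (-(L * lam * c^2)) * P
  set Bad : Finset (Fin N → V) := Finset.univ.filter
      (fun K => ∃ i j : Fin N, i ≠ j ∧
        lam * L / 2 < (Nat.card {l : Fin L // K i l = K j l} : ℝ)) with hBadDef
  have hcardBad : (Nat.card {K : Fin N → V // ∃ i j : Fin N, i ≠ j ∧
      lam * L / 2 < (Nat.card {l : Fin L // K i l = K j l} : ℝ)} : ℝ) = (Bad.card : ℝ) := by
    rw [hBadDef, Nat.card_eq_fintype_card, Fintype.card_subtype]
  have hsub : Bad ⊆ (Finset.univ : Finset (Fin N)).offDiag.biUnion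
      (fun q : Fin N × Fin N => Finset.univ.filter (fun K : Fin N → V =>
        lam * L / 2 < (Nat.card {l : Fin L // K q.1 l = K q.2 l} : ℝ))) := by
    intro K hK
    rw [hBadDef, Finset.mem_filter] at hK
    obtain ⟨-, i, j, hij, h⟩ := hK
    refine Finset.mem_biUnion.mpr ⟨(i, j),
      Finset.mem_offDiag.mpr ⟨Finset.mem_univ _, Finset.mem_univ _, hij⟩, ?_⟩
    exact Finset.mem_filter.mpr ⟨Finset.mem_univ _, h⟩
  have hcard1 : Bad.card ≤ ∑ q ∈ (Finset.univ : Finset (Fin N)).offDiag,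
      (Finset.univ.filter (fun K : Fin N → V =>
        lam * L / 2 < (Nat.card {l : Fin L // K q.1 l = K q.2 l} : ℝ))).card :=
    (Finset.card_le_card hsub).trans Finset.card_biUnion_le
  have hpair : ∀ q : Fin N × Fin N, q ∈ (Finset.univ : Finset (Fin N)).offDiag →
      (((Finset.univ.filter (fun K : Fin N → V =>
        lam * L / 2 < (Nat.card {l : Fin L // K q.1 l = K q.2 l} : ℝ))).card : ℝ))
        = Tc * D / P := by
    intro q hq
    have hij : q.1 ≠ q.2 := (Finset.mem_offDiag.mp hq).2.2
    have h := card_split (V := V) q.1 q.2 hij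
      (fun f g => lam * L / 2 < (Nat.card {l : Fin L // f l = g l} : ℝ))
    have h1 : Nat.card {K : Fin N → V //
        lam * L / 2 < (Nat.card {l : Fin L // K q.1 l = K q.2 l} : ℝ)}
        = (Finset.univ.filter (fun K : Fin N → V =>
          lam * L / 2 < (Nat.card {l : Fin L // K q.1 l = K q.2 l} : ℝ))).card := by
      rw [Nat.card_eq_fintype_card, Fintype.card_subtype]
    rw [eq_div_iff hPpos.ne', ← h1, hTcDef, hD, hP]
    simp only [← Nat.card_eq_fintype_card]
    exact_mod_cast h
  have hsum : ((∑ q ∈ (Finset.univ : Finset (Fin N)).offDiag,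
      (Finset.univ.filter (fun K : Fin N → V =>
        lam * L / 2 < (Nat.card {l : Fin L // K q.1 l = K q.2 l} : ℝ))).card : ℕ) : ℝ)
      = ((Finset.univ : Finset (Fin N)).offDiag.card : ℝ) * (Tc * D / P) := by
    push_cast
    rw [Finset.sum_congr rfl hpair, Finset.sum_const, nsmul_eq_mul]
  have hoff : (((Finset.univ : Finset (Fin N)).offDiag.card : ℕ) : ℝ)
      = (N : ℝ) * ((N : ℝ) - 1) := by
    rw [Finset.offDiag_card, Finset.card_univ, Fintype.card_fin,
      Nat.cast_sub (Nat.le_mul_of_pos_left N hN)]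
    push_cast
    ring
  have hrpow : (2:ℝ) ^ (-((L : ℝ) * lam * c ^ 2) / Real.log 2)
      = Real.exp (-((L : ℝ) * lam * c ^ 2)) := by
    rw [Real.rpow_def_of_pos (by norm_num : (0:ℝ) < 2)]
    congr 1
    have hlog : Real.log 2 ≠ 0 := ne_of_gt (Real.log_pos (by norm_num))
    field_simp
  rw [hcardBad, hrpow, div_le_iff₀ hDpos]
  have hTnonneg : 0 ≤ ((Finset.univ : Finset (Fin N)).offDiag.card : ℝ) := Nat.cast_nonneg _
  calc (Bad.card : ℝ)
      ≤ ((Finset.univ : Finset (Fin N)).offDiag.card : ℝ) * (Tc * D / P) := by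
        rw [← hsum]; exact_mod_cast hcard1
    _ ≤ ((Finset.univ : Finset (Fin N)).offDiag.card : ℝ)
        * (Real.exp (-((L : ℝ) * lam * c ^ 2)) * D) := by
        apply mul_le_mul_of_nonneg_left _ hTnonneg
        rw [div_le_iff₀ hPpos]
        nlinarith [mul_le_mul_of_nonneg_right hchern hDpos.le]
    _ = (N : ℝ) * ((N : ℝ) - 1) * Real.exp (-((L : ℝ) * lam * c ^ 2)) * D := by
        rw [hoff]; ring
end
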